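/- A simplicial complex X has the disc local injectivity property up to dimension 0 if and only if X is nonempty, connected, and has more than one vertex. -/

import Mathlib

/-! Shared simplicial-complex framework. -/

/-- The model `m`-sphere, for an integer `m`; it is empty when `m < 0`,
and is the unit sphere in `ℝ^{m+1}` when `m ≥ 0`. -/
def sphereSpace (m : ℤ) : Type :=
  {x : EuclideanSpace ℝ (Fin (m + 1).toNat) // ‖x‖ = 1 ∧ 0 ≤ m}

noncomputable instance (m : ℤ) : TopologicalSpace (sphereSpace m) := by
  unfold sphereSpace; infer_instance

/-- The model `m`-disc: empty for `m < 0`, a point for `m = 0`,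
the closed unit ball in `ℝ^m` for `m ≥ 0`. -/
def discSpace (m : ℤ) : Type :=
  {x : EuclideanSpace ℝ (Fin m.toNat) // ‖x‖ ≤ 1 ∧ 0 ≤ m}

noncomputable instance (m : ℤ) : TopologicalSpace (discSpace m) := by
  unfold discSpace; infer_instance

/-- The inclusion of the model `m`-sphere as the boundary of the model `(m+1)`-disc. -/
noncomputable local instance (priority := low) (α : Type*) : DecidableEq α :=
  fun _ _ => Classical.propDecidable _

def sphereToDisc (m : ℤ) (x : sphereSpace m) : discSpace (m + 1) :=
  ⟨x.1, le_of_eq x.2.1, by have := x.2.2; omega⟩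

/-- An abstract simplicial complex on a vertex set `V`: a collection of nonempty
finite subsets of `V` closed under passing to nonempty subsets. -/
def IsComplex {V : Type*} (K : Set (Finset V)) : Prop :=
  ∀ σ ∈ K, σ ≠ ∅ ∧ ∀ τ ⊆ σ, τ ≠ ∅ → τ ∈ K

/-- The link of a simplex `σ` in `K`. -/
def link {V : Type*} (K : Set (Finset V)) (σ : Finset V) : Set (Finset V) :=
  {τ | τ ∈ K ∧ Disjoint σ τ ∧ σ ∪ τ ∈ K}

/-- The geometric realization of `K`: formal convex combinations of vertices
supported on a simplex of `K`. -/
def spc {V : Type*} (K : Set (Finset V)) : Type _ :=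
  {w : V →₀ ℝ // w.support ∈ K ∧ (∀ v, 0 ≤ w v) ∧ (w.sum fun _ c => c) = 1}

instance {V : Type*} (K : Set (Finset V)) : TopologicalSpace (spc K) :=
  TopologicalSpace.induced (fun w => ((w.1 : V →₀ ℝ) : V → ℝ)) inferInstance

/-- A simplicial map from `K` to `X`, given on vertices by `f`. -/
def IsSimplicial {V U : Type*} (K : Set (Finset V)) (X : Set (Finset U)) (f : V → U) : Prop :=
  ∀ σ ∈ K, σ.image f ∈ X

/-- `f` is locally injective on `K`: it preserves dimensions of simplices. -/
def LocInj {V U : Type*} (K : Set (Finset V)) (f : V → U) : Prop :=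
  ∀ σ ∈ K, (σ.image f).card = σ.card

/-- `K` is a combinatorial triangulation of the `m`-sphere. -/
def IsCombTriSphere {V : Type*} (m : ℤ) (K : Set (Finset V)) : Prop :=
  IsComplex K ∧ Nonempty (spc K ≃ₜ sphereSpace m) ∧
    ∀ σ ∈ K, Nonempty (spc (link K σ) ≃ₜ sphereSpace (m - σ.card))

/-- `K` is a combinatorial triangulation of the `m`-disc. -/
def IsCombTriDisc {V : Type*} (m : ℤ) (K : Set (Finset V)) : Prop :=
  IsComplex K ∧ Nonempty (spc K ≃ₜ discSpace m) ∧
    ∀ σ ∈ K, Nonempty (spc (link K σ) ≃ₜ sphereSpace (m - σ.card)) ∨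
      Nonempty (spc (link K σ) ≃ₜ discSpace (m - σ.card))

/-- The boundary of a combinatorial triangulation of the `m`-disc:
the simplices whose link is not a sphere of the complementary dimension. -/
def discBoundary {V : Type*} (m : ℤ) (K : Set (Finset V)) : Set (Finset V) :=
  {σ ∈ K | ¬ Nonempty (spc (link K σ) ≃ₜ sphereSpace (m - σ.card))}

/-- The locally injective simplicial map `f` from a triangulated `m`-sphere `K` to `X`
extends to a locally injective simplicial map on a combinatorial triangulation of the
`(m+1)`-disc whose boundary is `K`. -/
def ExtendsToDisc {U V : Type} (X : Set (Finset U)) (m : ℤ) (K : Set (Finset V))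
    (f : V → U) : Prop :=
  ∃ (W : Type) (L : Set (Finset W)) (j : V → W) (F : W → U),
    IsCombTriDisc (m + 1) L ∧ Function.Injective j ∧
    (∀ σ ∈ K, σ.image j ∈ L) ∧
    ((fun σ : Finset V => σ.image j) '' K = discBoundary (m + 1) L) ∧
    (∀ v, F (j v) = f v) ∧ IsSimplicial L X F ∧ LocInj L F

/-- `X` has the disc local injectivity property up to dimension `d`. -/
def HasDiscLII {U : Type} (X : Set (Finset U)) (d : ℤ) : Prop :=
  ∀ m : ℤ, m ≤ d → ∀ (V : Type) (K : Set (Finset V)) (f : V → U),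
    IsCombTriSphere m K → IsSimplicial K X f → LocInj K f → ExtendsToDisc X m K f

/-- The continuous map `G` realizes the simplicial map `g`. -/
def Realizes {V U : Type} (K : Set (Finset V)) (X : Set (Finset U)) (g : V → U)
    (G : C(spc K, spc X)) : Prop :=
  ∀ w : spc K, ((G w).1 : U →₀ ℝ) = Finsupp.mapDomain g w.1

/-- `X` has the sphere local injectivity property up to dimension `d`. -/
def HasSphereLII {U : Type} (X : Set (Finset U)) (d : ℤ) : Prop :=
  ∀ m : ℤ, m ≤ d → ∀ f : C(sphereSpace m, spc X),
    ∃ (V : Type) (K : Set (Finset V)) (g : V → U) (e : spc K ≃ₜ sphereSpace m)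
      (G : C(spc K, spc X)),
      IsCombTriSphere m K ∧ IsSimplicial K X g ∧ LocInj K g ∧ Realizes K X g G ∧
      (f.comp (e : C(spc K, sphereSpace m))).Homotopic G

/-- A space is `d`-connected (`d ∈ ℤ`): every map from a sphere of dimension `≤ d`
extends over the disc. -/
def DConnected (X : Type*) [TopologicalSpace X] (d : ℤ) : Prop :=
  ∀ m : ℤ, m ≤ d → ∀ f : C(sphereSpace m, X),
    ∃ F : C(discSpace (m + 1), X), ∀ x, F (sphereToDisc m x) = f x

/-- `K` is weakly Cohen–Macaulay of dimension `d`. -/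
def WCM {V : Type*} (K : Set (Finset V)) (d : ℤ) : Prop :=
  DConnected (spc K) (d - 1) ∧ ∀ σ ∈ K, DConnected (spc (link K σ)) (d - σ.card - 1)


section Aux
open Finsupp Function

variable {V : Type*} {K : Set (Finset V)}

lemma sphereSpace_isEmpty {m : ℤ} (hm : m < 0) : IsEmpty (sphereSpace m) :=
  ⟨fun x => absurd x.2.2 (by omega)⟩

lemma discSpace_isEmpty {m : ℤ} (hm : m < 0) : IsEmpty (discSpace m) :=
  ⟨fun x => absurd x.2.2 (by omega)⟩

lemma continuous_of_isEmpty' {α β : Type*} [TopologicalSpace α] [TopologicalSpace β] [IsEmpty α]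
    (f : α → β) : Continuous f := by
  refine continuous_def.2 fun s _ => ?_
  rw [Set.eq_empty_of_isEmpty (f ⁻¹' s)]; exact isOpen_empty

noncomputable def homeoOfIsEmpty {α β : Type*} [TopologicalSpace α] [TopologicalSpace β]
    [IsEmpty α] [IsEmpty β] : α ≃ₜ β :=
  ⟨Equiv.equivOfIsEmpty α β, continuous_of_isEmpty' _, continuous_of_isEmpty' _⟩

lemma spc_embedding (K : Set (Finset V)) :
    Topology.IsEmbedding (fun w : spc K => ((w.1 : V →₀ ℝ) : V → ℝ)) :=
  ⟨⟨rfl⟩, fun a b h => Subtype.ext (DFunLike.coe_injective h)⟩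

instance spc_t2 (K : Set (Finset V)) : T2Space (spc K) := (spc_embedding K).t2Space

lemma spc_continuous_apply (K : Set (Finset V)) (v : V) :
    Continuous (fun w : spc K => (w.1 : V →₀ ℝ) v) :=
  (continuous_apply v).comp (continuous_induced_dom (f := fun w : spc K => ((w.1 : V →₀ ℝ) : V → ℝ)))

lemma continuous_into_spc {α : Type*} [TopologicalSpace α] (g : α → spc K)
    (h : ∀ v, Continuous fun x => (g x).1 v) : Continuous g :=
  continuous_induced_rng.2 (continuous_pi h)

lemma spc_support_nonempty (w : spc K) : w.1.support.Nonempty := by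
  rcases Finset.eq_empty_or_nonempty w.1.support with h | h
  · exfalso
    have hs := w.2.2.2
    rw [Finsupp.sum, h, Finset.sum_empty] at hs
    norm_num at hs
  · exact h

noncomputable def vtx (K : Set (Finset V)) (v : V) (h : ({v} : Finset V) ∈ K) : spc K :=
  ⟨Finsupp.single v 1, by rw [Finsupp.support_single_ne_zero v one_ne_zero]; exact h,
   fun u => by rw [Finsupp.single_apply]; split <;> norm_num,
   by rw [Finsupp.sum_single_index]; rfl⟩

@[simp] lemma vtx_coe (v : V) (h : ({v} : Finset V) ∈ K) :
    (vtx K v h).1 = Finsupp.single v 1 := rfl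

lemma eq_single_of_support_singleton (w : spc K) {v : V} (h : w.1.support = {v}) :
    w.1 = Finsupp.single v 1 := by
  have hs := w.2.2.2
  rw [Finsupp.sum, h, Finset.sum_singleton] at hs
  ext u
  rw [Finsupp.single_apply]
  split
  · next heq => rw [← heq]; exact hs
  · next hne =>
    by_contra h0
    have : u ∈ w.1.support := Finsupp.mem_support_iff.2 h0
    rw [h, Finset.mem_singleton] at this
    exact hne this.symm

lemma sum_const_smul (w : V →₀ ℝ) (a : ℝ) :
    ((a • w).sum fun _ c => c) = a * w.sum fun _ c => c := by
  rw [Finsupp.sum_smul_index (fun _ => rfl), Finsupp.sum, Finsupp.sum, Finset.mul_sum]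

noncomputable def segPt (hK : IsComplex K) {σ : Finset V} (hσ : σ ∈ K) (w₁ w₂ : spc K)
    (h1 : w₁.1.support ⊆ σ) (h2 : w₂.1.support ⊆ σ) (t : ℝ) (ht0 : 0 ≤ t) (ht1 : t ≤ 1) :
    spc K := by
  refine ⟨(1 - t) • w₁.1 + t • w₂.1, ?_, ?_, ?_⟩
  · have hsub : ((1 - t) • w₁.1 + t • w₂.1).support ⊆ σ := by
      refine Finsupp.support_add.trans (Finset.union_subset ?_ ?_)
      · exact (Finsupp.support_smul.trans h1)
      · exact (Finsupp.support_smul.trans h2)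
    have hsum : (((1 - t) • w₁.1 + t • w₂.1).sum fun _ c => c) = 1 := by
      rw [Finsupp.sum_add_index' (fun _ => rfl) (fun _ c₁ c₂ => rfl), sum_const_smul,
        sum_const_smul, w₁.2.2.2, w₂.2.2.2]
      ring
    have hne : ((1 - t) • w₁.1 + t • w₂.1).support ≠ ∅ := by
      intro h0
      rw [Finsupp.sum, h0, Finset.sum_empty] at hsum
      norm_num at hsum
    exact (hK σ hσ).2 _ hsub hne
  · intro v
    simp only [Finsupp.add_apply, Finsupp.smul_apply, smul_eq_mul]
    have := w₁.2.2.1 v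
    have := w₂.2.2.1 v
    nlinarith
  · rw [Finsupp.sum_add_index' (fun _ => rfl) (fun _ c₁ c₂ => rfl), sum_const_smul,
      sum_const_smul, w₁.2.2.2, w₂.2.2.2]
    ring

lemma segment_joined (hK : IsComplex K) {σ : Finset V} (hσ : σ ∈ K) (w₁ w₂ : spc K)
    (h1 : w₁.1.support ⊆ σ) (h2 : w₂.1.support ⊆ σ) : Joined w₁ w₂ := by
  refine ⟨⟨⟨fun t => segPt hK hσ w₁ w₂ h1 h2 t.1 t.2.1 t.2.2, ?_⟩, ?_, ?_⟩⟩
  · refine continuous_into_spc _ fun v => ?_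
    have : (fun t : unitInterval => (segPt hK hσ w₁ w₂ h1 h2 t.1 t.2.1 t.2.2).1 v)
        = fun t : unitInterval => (1 - t.1) * w₁.1 v + t.1 * w₂.1 v := by
      funext t
      simp [segPt, Finsupp.add_apply, Finsupp.smul_apply, smul_eq_mul]
    rw [this]
    fun_prop
  · apply Subtype.ext
    simp [segPt]
  · apply Subtype.ext
    simp [segPt]

end Aux
section Aux2
open Finsupp Function

variable {V : Type*} {K : Set (Finset V)}

/-- Edge relation on vertices of a complex. -/
def eRel (K : Set (Finset V)) (a b : V) : Prop := a ≠ b ∧ ({a, b} : Finset V) ∈ K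

lemma eRel_symm {a b : V} (h : eRel K a b) : eRel K b a :=
  ⟨h.1.symm, by rw [Finset.pair_comm]; exact h.2⟩

lemma eRel_vtx_left (hK : IsComplex K) {a b : V} (h : eRel K a b) : ({a} : Finset V) ∈ K :=
  (hK _ h.2).2 {a} (by intro x hx; simp at hx; simp [hx]) (by simp)

lemma eRel_vtx_right (hK : IsComplex K) {a b : V} (h : eRel K a b) : ({b} : Finset V) ∈ K :=
  eRel_vtx_left hK (eRel_symm h)

lemma vertices_reachable (hK : IsComplex K) [ConnectedSpace (spc K)]
    {a b : V} (ha : ({a}:Finset V) ∈ K) (hb : ({b}:Finset V) ∈ K) :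
    Relation.ReflTransGen (eRel K) a b := by
  classical
  set S : Set V := {v | Relation.ReflTransGen (eRel K) a v} with hS
  set A : Set (spc K) := {w | ∀ v, v ∉ S → w.1 v = 0} with hA
  set B : Set (spc K) := {w | ∀ v, v ∈ S → w.1 v = 0} with hB
  have hAclosed : IsClosed A := by
    have : A = ⋂ v, ⋂ (_ : v ∉ S), {w : spc K | w.1 v = 0} := by
      ext w; simp [hA]
    rw [this]
    exact isClosed_iInter fun v => isClosed_iInter fun _ =>
      isClosed_eq (spc_continuous_apply K v) continuous_const
  have hBclosed : IsClosed B := by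
    have : B = ⋂ v, ⋂ (_ : v ∈ S), {w : spc K | w.1 v = 0} := by
      ext w; simp [hB]
    rw [this]
    exact isClosed_iInter fun v => isClosed_iInter fun _ =>
      isClosed_eq (spc_continuous_apply K v) continuous_const
  have hdisj : A ∩ B = ∅ := by
    ext w
    simp only [Set.mem_inter_iff, Set.mem_empty_iff_false, iff_false, not_and]
    intro h1 h2
    obtain ⟨v, hv⟩ := spc_support_nonempty w
    have hv0 : w.1 v ≠ 0 := Finsupp.mem_support_iff.1 hv
    by_cases hvS : v ∈ S
    · exact hv0 (h2 v hvS)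
    · exact hv0 (h1 v hvS)
  have hcover : A ∪ B = Set.univ := by
    ext w
    simp only [Set.mem_union, Set.mem_univ, iff_true, hA, hB, Set.mem_setOf_eq]
    by_cases hw : ∀ v ∈ w.1.support, v ∈ S
    · left
      intro v hv
      by_contra h0
      exact hv (hw v (Finsupp.mem_support_iff.2 h0))
    · push_neg at hw
      obtain ⟨v', hv'supp, hv'S⟩ := hw
      right
      intro v hvS
      by_contra h0
      have hvsupp : v ∈ w.1.support := Finsupp.mem_support_iff.2 h0
      have hvv' : v ≠ v' := fun h => hv'S (h ▸ hvS)
      have hpair : ({v, v'} : Finset V) ∈ K := by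
        refine (hK _ w.2.1).2 {v, v'} ?_ (by simp)
        intro x hx
        rcases Finset.mem_insert.1 hx with h | h
        · exact h ▸ hvsupp
        · rw [Finset.mem_singleton] at h; exact h ▸ hv'supp
      exact hv'S (hvS.tail ⟨hvv', hpair⟩)
  have hAopen : IsOpen A := by
    have : A = Bᶜ := by
      ext w
      constructor
      · intro hwA hwB
        exact (Set.eq_empty_iff_forall_notMem.1 hdisj w) ⟨hwA, hwB⟩
      · intro hwB
        rcases (Set.eq_univ_iff_forall.1 hcover w) with h | h
        · exact h
        · exact absurd h hwB
    rw [this]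
    exact hBclosed.isOpen_compl
  have hCl : IsClopen A := ⟨hAclosed, hAopen⟩
  have hane : (vtx K a ha) ∈ A := by
    intro v hv
    have hva : a ≠ v := by rintro rfl; exact hv Relation.ReflTransGen.refl
    rw [vtx_coe, Finsupp.single_apply, if_neg hva]
  have hAuniv : A = Set.univ := by
    rcases isClopen_iff.1 hCl with h | h
    · exact absurd (h ▸ hane) (Set.notMem_empty _)
    · exact h
  have hbA : (vtx K b hb) ∈ A := hAuniv ▸ Set.mem_univ _
  by_contra hnb
  have : (vtx K b hb).1 b = 0 := hbA b hnb
  rw [vtx_coe, Finsupp.single_apply] at this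
  simp at this

lemma joined_vtx_of_rtg (hK : IsComplex K) {u v : V} (h : Relation.ReflTransGen (eRel K) u v)
    (hu : ({u}:Finset V) ∈ K) :
    ∃ hv : ({v}:Finset V) ∈ K, Joined (vtx K u hu) (vtx K v hv) := by
  induction h with
  | refl => exact ⟨hu, Joined.refl _⟩
  | @tail c d hxy hstep ih =>
    obtain ⟨hc, hj⟩ := ih
    have hd : ({d} : Finset V) ∈ K := eRel_vtx_right hK hstep
    refine ⟨hd, hj.trans ?_⟩
    refine segment_joined hK hstep.2 _ _ ?_ ?_
    · rw [vtx_coe, Finsupp.support_single_ne_zero _ one_ne_zero]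
      simp
    · rw [vtx_coe, Finsupp.support_single_ne_zero _ one_ne_zero]
      simp

lemma joined_to_vtx (hK : IsComplex K) (w : spc K) :
    ∃ (v : V) (hv : ({v}:Finset V) ∈ K), Joined w (vtx K v hv) := by
  obtain ⟨v, hv⟩ := spc_support_nonempty w
  have hvK : ({v} : Finset V) ∈ K :=
    (hK _ w.2.1).2 {v} (Finset.singleton_subset_iff.2 hv) (by simp)
  refine ⟨v, hvK, segment_joined hK w.2.1 _ _ le_rfl ?_⟩
  rw [vtx_coe, Finsupp.support_single_ne_zero _ one_ne_zero]
  exact Finset.singleton_subset_iff.2 hv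

lemma spc_connected (hK : IsComplex K) {u₀ : V} (h0 : ({u₀}:Finset V) ∈ K)
    (hconn : ∀ u v, ({u}:Finset V) ∈ K → ({v}:Finset V) ∈ K →
      Relation.ReflTransGen (eRel K) u v) :
    ConnectedSpace (spc K) := by
  have : PathConnectedSpace (spc K) := by
    refine ⟨⟨vtx K u₀ h0⟩, fun x y => ?_⟩
    obtain ⟨vx, hvx, hjx⟩ := joined_to_vtx hK x
    obtain ⟨vy, hvy, hjy⟩ := joined_to_vtx hK y
    obtain ⟨hv', hj⟩ := joined_vtx_of_rtg hK (hconn vx vy hvx hvy) hvx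
    exact (hjx.trans hj).trans hjy.symm
  exact PathConnectedSpace.connectedSpace

lemma rtg_map {U : Type*} {X : Set (Finset U)} {F : V → U} (hF : IsSimplicial K X F)
    (hloc : LocInj K F) {a b : V} (h : Relation.ReflTransGen (eRel K) a b) :
    Relation.ReflTransGen (eRel X) (F a) (F b) := by
  induction h with
  | refl => exact Relation.ReflTransGen.refl
  | @tail c d hxy hstep ih =>
    refine ih.tail ?_
    have himg : ({c, d} : Finset V).image F ∈ X := hF _ hstep.2
    have hcard : (({c, d} : Finset V).image F).card = 2 := by
      rw [hloc _ hstep.2, Finset.card_pair hstep.1]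
    have himg2 : ({c, d} : Finset V).image F = {F c, F d} := by
      rw [Finset.image_insert, Finset.image_singleton]
    refine ⟨?_, by rwa [himg2] at himg⟩
    intro hFeq
    rw [himg2, hFeq] at hcard
    simp at hcard

end Aux2
section Aux3
open Finsupp Function

variable {V : Type*}

/-! Model spaces. -/

instance sphere_t2 (m : ℤ) : T2Space (sphereSpace m) := by unfold sphereSpace; infer_instance
instance disc_t2 (m : ℤ) : T2Space (discSpace m) := by unfold discSpace; infer_instance

instance : Subsingleton (Fin ((0:ℤ)+1).toNat) := by
  rw [show ((0:ℤ)+1).toNat = 1 from rfl]; infer_instance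

def i0 : Fin ((0:ℤ)+1).toNat := ⟨0, by decide⟩

noncomputable def cst (r : ℝ) : EuclideanSpace ℝ (Fin ((0:ℤ)+1).toNat) := WithLp.toLp 2 (fun _ => r)

lemma cst_apply (r : ℝ) (i : Fin ((0:ℤ)+1).toNat) : cst r i = r := rfl

lemma norm_cst (r : ℝ) : ‖cst r‖ = |r| := by
  have h2 : √(∑ _i : Fin ((0:ℤ)+1).toNat, ‖r‖ ^ 2) = |r| := by
    rw [show ((0:ℤ)+1).toNat = 1 from rfl]
    simp [Real.sqrt_sq_eq_abs]
  exact (EuclideanSpace.norm_eq _).trans h2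

noncomputable def spt (r : ℝ) (hr : |r| = 1) : sphereSpace 0 :=
  ⟨cst r, by rw [norm_cst, hr], le_refl 0⟩

lemma sphere0_val (x : sphereSpace 0) : x.1 = cst (x.1 i0) := by
  rw [WithLp.ext_iff]; funext i; rw [Subsingleton.elim i i0]; rfl

lemma sphere0_cases (x : sphereSpace 0) :
    x = spt 1 (by norm_num) ∨ x = spt (-1) (by norm_num) := by
  have h := x.2.1
  rw [sphere0_val x, norm_cst] at h
  rcases (abs_eq (by norm_num : (0:ℝ) ≤ 1)).1 h with h1 | h1
  · left; apply Subtype.ext; rw [sphere0_val x, h1]; rfl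
  · right; apply Subtype.ext; rw [sphere0_val x, h1]; rfl

lemma spt_ne : spt 1 (by norm_num) ≠ spt (-1) (by norm_num) := by
  intro h
  have := congrArg (fun x : sphereSpace 0 => x.1 i0) h
  simp only [spt, cst_apply] at this
  norm_num at this

instance : Finite (sphereSpace 0) := by
  apply Finite.of_surjective (fun b : Bool => if b then spt 1 (by norm_num) else spt (-1) (by norm_num))
  intro x
  rcases sphere0_cases x with h | h
  · exact ⟨true, h.symm⟩
  · exact ⟨false, h.symm⟩

/-! `discSpace 0` is a point. -/

instance : IsEmpty (Fin ((0:ℤ)).toNat) := by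
  rw [show ((0:ℤ)).toNat = 0 from rfl]; infer_instance

noncomputable def d0 : discSpace 0 := ⟨0, by rw [norm_zero]; norm_num, le_refl 0⟩

instance : Nonempty (discSpace 0) := ⟨d0⟩

instance : Subsingleton (discSpace 0) :=
  ⟨fun x y => Subtype.ext ((WithLp.ext_iff _).2 (funext fun i => isEmptyElim i))⟩

/-! `discSpace 1`. -/

def j0 : Fin ((1:ℤ)).toNat := ⟨0, by decide⟩

noncomputable def cst1 (r : ℝ) : EuclideanSpace ℝ (Fin ((1:ℤ)).toNat) := WithLp.toLp 2 (fun _ => r)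

lemma cst1_apply (r : ℝ) (i : Fin ((1:ℤ)).toNat) : cst1 r i = r := rfl

instance : Subsingleton (Fin ((1:ℤ)).toNat) := by
  rw [show ((1:ℤ)).toNat = 1 from rfl]; infer_instance

lemma norm_cst1 (r : ℝ) : ‖cst1 r‖ = |r| := by
  have h2 : √(∑ _i : Fin ((1:ℤ)).toNat, ‖r‖ ^ 2) = |r| := by
    rw [show ((1:ℤ)).toNat = 1 from rfl]
    simp [Real.sqrt_sq_eq_abs]
  exact (EuclideanSpace.norm_eq _).trans h2

noncomputable def dpt (r : ℝ) (hr : |r| ≤ 1) : discSpace 1 :=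
  ⟨cst1 r, by rw [norm_cst1]; exact hr, by norm_num⟩

lemma disc1_val (x : discSpace 1) : x.1 = cst1 (x.1 j0) := by
  rw [WithLp.ext_iff]; funext i; rw [Subsingleton.elim i j0]; rfl

lemma disc1_abs_le (x : discSpace 1) : |x.1 j0| ≤ 1 := by
  have h := x.2.1
  rwa [disc1_val x, norm_cst1] at h

lemma disc1_eq_dpt (x : discSpace 1) : x = dpt (x.1 j0) (disc1_abs_le x) :=
  Subtype.ext (disc1_val x)

lemma disc1_set_eq :
    {x : EuclideanSpace ℝ (Fin ((1:ℤ)).toNat) | ‖x‖ ≤ 1 ∧ 0 ≤ (1:ℤ)} =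
      Metric.closedBall 0 1 := by
  ext x
  simp [Metric.mem_closedBall, dist_zero_right]

instance : CompactSpace (discSpace 1) := by
  unfold discSpace
  have h := isCompact_closedBall (0 : EuclideanSpace ℝ (Fin ((1:ℤ)).toNat)) 1
  rw [← disc1_set_eq] at h
  exact isCompact_iff_compactSpace.1 h

instance : ConnectedSpace (discSpace 1) := by
  unfold discSpace
  have h : IsConnected {x : EuclideanSpace ℝ (Fin ((1:ℤ)).toNat) | ‖x‖ ≤ 1 ∧ 0 ≤ (1:ℤ)} := by
    rw [disc1_set_eq]
    exact (convex_closedBall (0 : EuclideanSpace ℝ (Fin ((1:ℤ)).toNat)) 1).isConnected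
      ⟨0, by simp⟩
  exact Subtype.connectedSpace h

/-! Generic homeomorphism builders. -/

noncomputable def equivHomeoOfDiscrete {α β : Type*} [TopologicalSpace α] [TopologicalSpace β]
    [DiscreteTopology α] [DiscreteTopology β] (e : α ≃ β) : α ≃ₜ β :=
  ⟨e, continuous_of_discreteTopology, continuous_of_discreteTopology⟩

noncomputable def homeoOfSubsingleton {α β : Type*} [TopologicalSpace α] [TopologicalSpace β]
    [Subsingleton α] [Subsingleton β] (x0 : α) (y0 : β) : α ≃ₜ β :=
  ⟨⟨fun _ => y0, fun _ => x0, fun _ => Subsingleton.elim _ _, fun _ => Subsingleton.elim _ _⟩,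
    continuous_const, continuous_const⟩

/-! Small complexes. -/

lemma spc_empty_isEmpty : IsEmpty (spc (∅ : Set (Finset V))) := ⟨fun w => w.2.1⟩

noncomputable def emptySphereHomeo {m : ℤ} (hm : m < 0) :
    spc (∅ : Set (Finset V)) ≃ₜ sphereSpace m :=
  haveI := spc_empty_isEmpty (V := V)
  haveI := sphereSpace_isEmpty hm
  homeoOfIsEmpty

lemma vtx_ne {K : Set (Finset V)} {a b : V} (hab : a ≠ b) (ha : ({a}:Finset V) ∈ K)
    (hb : ({b}:Finset V) ∈ K) : vtx K a ha ≠ vtx K b hb := by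
  intro h
  have := congrArg (fun w : spc K => w.1 a) h
  simp only [vtx_coe] at this
  rw [Finsupp.single_apply, Finsupp.single_apply, if_pos rfl, if_neg hab.symm] at this
  norm_num at this

lemma vtx_inj {K : Set (Finset V)} {a b : V} (ha : ({a}:Finset V) ∈ K)
    (hb : ({b}:Finset V) ∈ K) (h : vtx K a ha = vtx K b hb) : a = b := by
  by_contra hab
  exact vtx_ne hab ha hb h

/-- The one-point complex. -/
lemma spcOne_eq {a : V} (w : spc ({({a} : Finset V)} : Set (Finset V))) :
    w = vtx ({({a} : Finset V)} : Set (Finset V)) a rfl := by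
  apply Subtype.ext
  refine Eq.trans ?_ (vtx_coe a rfl).symm
  exact eq_single_of_support_singleton w w.2.1

instance spcOne_subsingleton {a : V} :
    Subsingleton (spc ({({a} : Finset V)} : Set (Finset V))) :=
  ⟨fun x y => (spcOne_eq x).trans (spcOne_eq y).symm⟩

noncomputable def onePointHomeo (a : V) :
    spc ({({a} : Finset V)} : Set (Finset V)) ≃ₜ discSpace 0 :=
  homeoOfSubsingleton (vtx ({({a} : Finset V)} : Set (Finset V)) a rfl) d0

/-- The two-point complex. -/
lemma spcTwo_cases {a b : V} (w : spc ({({a} : Finset V), {b}} : Set (Finset V))) :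
    w = vtx ({({a} : Finset V), {b}} : Set (Finset V)) a (Set.mem_insert _ _) ∨
      w = vtx ({({a} : Finset V), {b}} : Set (Finset V)) b (Set.mem_insert_of_mem _ rfl) := by
  rcases Set.mem_insert_iff.1 w.2.1 with h | h
  · left
    apply Subtype.ext
    rw [vtx_coe]
    exact eq_single_of_support_singleton w h
  · right
    apply Subtype.ext
    rw [vtx_coe]
    exact eq_single_of_support_singleton w (Set.mem_singleton_iff.1 h)

noncomputable def twoPointEquiv {a b : V} (hab : a ≠ b) :
    spc ({({a} : Finset V), {b}} : Set (Finset V)) ≃ sphereSpace 0 where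
  toFun w := if w.1 a = 0 then spt (-1) (by norm_num) else spt 1 (by norm_num)
  invFun x := if x.1 i0 = 1 then vtx ({({a} : Finset V), {b}} : Set (Finset V)) a (Set.mem_insert _ _)
    else vtx ({({a} : Finset V), {b}} : Set (Finset V)) b (Set.mem_insert_of_mem _ rfl)
  left_inv w := by
    dsimp only
    rcases spcTwo_cases w with h | h <;> rw [h]
    · have h1 : (vtx ({({a} : Finset V), {b}} : Set (Finset V)) a (Set.mem_insert _ _)).1 a = 1 := by
        rw [vtx_coe, Finsupp.single_apply, if_pos rfl]
      rw [h1, if_neg (show ¬((1:ℝ) = 0) from one_ne_zero)]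
      rw [show (spt 1 (by norm_num)).1 i0 = 1 from rfl, if_pos (show (1:ℝ) = 1 from rfl)]
    · have h1 : (vtx ({({a} : Finset V), {b}} : Set (Finset V)) b (Set.mem_insert_of_mem _ rfl)).1 a = 0 := by
        rw [vtx_coe, Finsupp.single_apply, if_neg hab.symm]
      rw [h1, if_pos (show (0:ℝ) = 0 from rfl)]
      rw [show (spt (-1) (by norm_num)).1 i0 = -1 from rfl,
        if_neg (show ¬((-1:ℝ) = 1) by norm_num)]
  right_inv x := by
    dsimp only
    rcases sphere0_cases x with h | h <;> rw [h]
    · rw [show (spt 1 (by norm_num)).1 i0 = 1 from rfl, if_pos (show (1:ℝ) = 1 from rfl)]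
      have h1 : (vtx ({({a} : Finset V), {b}} : Set (Finset V)) a (Set.mem_insert _ _)).1 a = 1 := by
        rw [vtx_coe, Finsupp.single_apply, if_pos rfl]
      rw [h1, if_neg (show ¬((1:ℝ) = 0) from one_ne_zero)]
    · rw [show (spt (-1) (by norm_num)).1 i0 = -1 from rfl,
        if_neg (show ¬((-1:ℝ) = 1) by norm_num)]
      have h1 : (vtx ({({a} : Finset V), {b}} : Set (Finset V)) b (Set.mem_insert_of_mem _ rfl)).1 a = 0 := by
        rw [vtx_coe, Finsupp.single_apply, if_neg hab.symm]
      rw [h1, if_pos (show (0:ℝ) = 0 from rfl)]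

lemma spcTwo_finite {a b : V} :
    Finite (spc ({({a} : Finset V), {b}} : Set (Finset V))) := by
  apply Finite.of_surjective (fun c : Bool =>
    if c then vtx ({({a} : Finset V), {b}} : Set (Finset V)) a (Set.mem_insert _ _)
    else vtx ({({a} : Finset V), {b}} : Set (Finset V)) b (Set.mem_insert_of_mem _ rfl))
  intro w
  rcases spcTwo_cases w with h | h
  · exact ⟨true, by rw [h]; rfl⟩
  · exact ⟨false, by rw [h]; rfl⟩

noncomputable def twoPointHomeo {a b : V} (hab : a ≠ b) :
    spc ({({a} : Finset V), {b}} : Set (Finset V)) ≃ₜ sphereSpace 0 :=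
  haveI := spcTwo_finite (a := a) (b := b)
  equivHomeoOfDiscrete (twoPointEquiv hab)

end Aux3
section Aux4
open Finsupp Function

variable {W : Type*}

/-- The path complex on vertices `ι 0, …, ι n`. -/
def pathC (n : ℕ) (ι : ℕ → W) : Set (Finset W) :=
  {σ | (∃ i ≤ n, σ = {ι i}) ∨ (∃ i < n, σ = {ι i, ι (i+1)})}

lemma subset_pair {α : Type*} {x y : α} {τ : Finset α} (h : τ ⊆ {x, y}) (hne : τ ≠ ∅) :
    τ = {x} ∨ τ = {y} ∨ τ = {x, y} := by
  classical
  by_cases hx : x ∈ τ <;> by_cases hy : y ∈ τ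
  · right; right
    refine Finset.Subset.antisymm h ?_
    rw [Finset.insert_subset_iff, Finset.singleton_subset_iff]
    exact ⟨hx, hy⟩
  · left
    refine Finset.Subset.antisymm ?_ (Finset.singleton_subset_iff.2 hx)
    intro z hz
    rcases Finset.mem_insert.1 (h hz) with h1 | h1
    · simp [h1]
    · rw [Finset.mem_singleton] at h1
      exact absurd (h1 ▸ hz) hy
  · right; left
    refine Finset.Subset.antisymm ?_ (Finset.singleton_subset_iff.2 hy)
    intro z hz
    rcases Finset.mem_insert.1 (h hz) with h1 | h1
    · exact absurd (h1 ▸ hz) hx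
    · simp [h1]
  · exfalso
    apply hne
    rw [Finset.eq_empty_iff_forall_notMem]
    intro z hz
    rcases Finset.mem_insert.1 (h hz) with h1 | h1
    · exact hx (h1 ▸ hz)
    · rw [Finset.mem_singleton] at h1
      exact hy (h1 ▸ hz)

lemma pathC_isComplex (n : ℕ) (ι : ℕ → W) : IsComplex (pathC n ι) := by
  intro σ hσ
  rcases hσ with ⟨i, hi, rfl⟩ | ⟨i, hi, rfl⟩
  · refine ⟨by simp, fun τ hτ hne => ?_⟩
    rcases Finset.subset_singleton_iff.1 hτ with rfl | rfl
    · exact absurd rfl hne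
    · exact Or.inl ⟨i, hi, rfl⟩
  · refine ⟨by simp, fun τ hτ hne => ?_⟩
    rcases subset_pair hτ hne with rfl | rfl | rfl
    · exact Or.inl ⟨i, le_of_lt hi, rfl⟩
    · exact Or.inl ⟨i+1, hi, rfl⟩
    · exact Or.inr ⟨i, hi, rfl⟩

lemma pathC_card_le {n : ℕ} {ι : ℕ → W} {σ : Finset W} (h : σ ∈ pathC n ι) : σ.card ≤ 2 := by
  rcases h with ⟨i, _, rfl⟩ | ⟨i, _, rfl⟩
  · simp
  · exact (Finset.card_insert_le _ _).trans (by simp)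

/-- tent function -/
noncomputable def tent (t : ℝ) (i : ℕ) : ℝ := max 0 (1 - |t - i|)

lemma tent_nonneg (t : ℝ) (i : ℕ) : 0 ≤ tent t i := le_max_left _ _

lemma tent_self {t : ℝ} {k : ℕ} (h1 : (k:ℝ) ≤ t) (h2 : t ≤ k+1) : tent t k = 1 - (t - k) := by
  rw [tent, abs_of_nonneg (by linarith), max_eq_right (by linarith)]

lemma tent_succ {t : ℝ} {k : ℕ} (h1 : (k:ℝ) ≤ t) (h2 : t ≤ k+1) :
    tent t (k+1) = t - k := by
  rw [tent]
  have : |t - (↑(k+1) : ℝ)| = (k+1) - t := by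
    rw [abs_of_nonpos (by push_cast; linarith)]
    push_cast
    ring
  rw [this, max_eq_right (by linarith)]
  push_cast
  ring

lemma tent_far {t : ℝ} {k i : ℕ} (h1 : (k:ℝ) ≤ t) (h2 : t ≤ k+1) (hik : i ≠ k)
    (hik1 : i ≠ k+1) : tent t i = 0 := by
  rw [tent, max_eq_left]
  have : (1:ℝ) ≤ |t - i| := by
    rcases (by omega : i + 1 ≤ k ∨ k + 2 ≤ i) with h | h
    · refine le_abs.2 (Or.inl ?_)
      have : (i:ℝ) + 1 ≤ k := by exact_mod_cast Nat.cast_le.2 h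
      linarith
    · refine le_abs.2 (Or.inr ?_)
      have : (k:ℝ) + 2 ≤ i := by exact_mod_cast Nat.cast_le.2 h
      linarith
  linarith

/-- The point of the path complex at parameter `t`, using base index `k`. -/
noncomputable def pathPt (ι : ℕ → W) (t : ℝ) (k : ℕ) : W →₀ ℝ :=
  Finsupp.single (ι k) (1-(t-k)) + Finsupp.single (ι (k+1)) (t-k)

lemma pathPt_apply (ι : ℕ → W) (t : ℝ) (k : ℕ) (v : W) :
    pathPt ι t k v = (if ι k = v then 1-(t-k) else 0) + (if ι (k+1) = v then t-k else 0) := by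
  rw [pathPt, Finsupp.add_apply, Finsupp.single_apply, Finsupp.single_apply]

lemma pathPt_apply_of_ne (ι : ℕ → W) (t : ℝ) (k : ℕ) {v : W} (h1 : ι k ≠ v)
    (h2 : ι (k+1) ≠ v) : pathPt ι t k v = 0 := by
  rw [pathPt_apply, if_neg h1, if_neg h2, add_zero]

lemma pathPt_value {n : ℕ} {ι : ℕ → W} (hι : ∀ i ≤ n, ∀ j ≤ n, ι i = ι j → i = j)
    {t : ℝ} {k : ℕ} (hk : (k:ℝ) ≤ t) (hk2 : t ≤ k+1) (hkn : k + 1 ≤ n)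
    {i : ℕ} (hi : i ≤ n) : pathPt ι t k (ι i) = tent t i := by
  rw [pathPt_apply]
  by_cases h1 : i = k
  · subst h1
    rw [if_pos rfl, if_neg, tent_self hk hk2, add_zero]
    intro h
    have := hι _ hkn _ hi h
    omega
  · by_cases h2 : i = k + 1
    · subst h2
      rw [if_neg, if_pos rfl, tent_succ hk hk2, zero_add]
      intro h
      have := hι _ (by omega) _ hi h
      omega
    · rw [if_neg, if_neg, tent_far hk hk2 h1 h2, add_zero]
      · intro h; exact h2 (hι _ hkn _ hi h).symm
      · intro h; exact h1 (hι _ (by omega) _ hi h).symm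

lemma pathPt_nonneg (ι : ℕ → W) {t : ℝ} {k : ℕ} (hk : (k:ℝ) ≤ t) (hk2 : t ≤ k+1) (v : W) :
    0 ≤ pathPt ι t k v := by
  rw [pathPt_apply]
  have h1 : (0:ℝ) ≤ 1 - (t - k) := by linarith
  have h2 : (0:ℝ) ≤ t - k := by linarith
  split <;> split <;> linarith

lemma pathPt_sum (ι : ℕ → W) (t : ℝ) (k : ℕ) : (pathPt ι t k).sum (fun _ c => c) = 1 := by
  rw [pathPt, Finsupp.sum_add_index' (fun _ => rfl) (fun _ c₁ c₂ => rfl),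
    Finsupp.sum_single_index rfl, Finsupp.sum_single_index rfl]
  ring

lemma pathPt_support (ι : ℕ → W) (t : ℝ) (k : ℕ) :
    (pathPt ι t k).support ⊆ {ι k, ι (k+1)} := by
  refine Finsupp.support_add.trans (Finset.union_subset ?_ ?_)
  · exact Finsupp.support_single_subset.trans (by simp)
  · exact Finsupp.support_single_subset.trans (by simp)

/-- Build a point of `spc K`. -/
noncomputable def mkSpc {K : Set (Finset W)} (hK : IsComplex K) (w : W →₀ ℝ) {σ : Finset W}
    (hσ : σ ∈ K) (hsub : w.support ⊆ σ) (hnn : ∀ v, 0 ≤ w v)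
    (hsum : (w.sum fun _ c => c) = 1) : spc K :=
  ⟨w, (hK σ hσ).2 _ hsub (by
    intro h0
    rw [Finsupp.sum, h0, Finset.sum_empty] at hsum
    norm_num at hsum), hnn, hsum⟩

@[simp] lemma mkSpc_coe {K : Set (Finset W)} (hK : IsComplex K) (w : W →₀ ℝ) {σ : Finset W}
    (hσ : σ ∈ K) (hsub : w.support ⊆ σ) (hnn : ∀ v, 0 ≤ w v)
    (hsum : (w.sum fun _ c => c) = 1) : (mkSpc hK w hσ hsub hnn hsum).1 = w := rfl

/-- The floor-based index. -/
noncomputable def kOf (n : ℕ) (t : ℝ) : ℕ := min ⌊t⌋₊ (n-1)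

lemma kOf_le {n : ℕ} (hn : 1 ≤ n) {t : ℝ} (ht0 : 0 ≤ t) (htn : t ≤ n) :
    ((kOf n t : ℝ) ≤ t ∧ t ≤ kOf n t + 1) ∧ kOf n t + 1 ≤ n := by
  have hfl : (⌊t⌋₊ : ℝ) ≤ t := Nat.floor_le ht0
  have hmin : (kOf n t : ℕ) ≤ ⌊t⌋₊ := min_le_left _ _
  refine ⟨⟨le_trans (by exact_mod_cast Nat.cast_le.2 hmin) hfl, ?_⟩, by
    have : kOf n t ≤ n - 1 := min_le_right _ _
    omega⟩
  by_cases h : ⌊t⌋₊ ≤ n - 1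
  · have : kOf n t = ⌊t⌋₊ := min_eq_left h
    rw [this]
    exact le_of_lt (Nat.lt_floor_add_one t)
  · have hk : kOf n t = n - 1 := min_eq_right (by omega)
    rw [hk]
    have : ((n:ℝ) - 1) + 1 = n := by ring
    have hcast : ((n - 1 : ℕ) : ℝ) = (n:ℝ) - 1 := by
      have : (1:ℕ) ≤ n := hn
      push_cast [Nat.cast_sub this]
      ring
    rw [hcast]
    linarith

end Aux4
section Aux4b
open Finsupp Function

variable {W : Type*}

lemma dpt_val (r : ℝ) (hr : |r| ≤ 1) : (dpt r hr).1 j0 = r := rfl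

noncomputable def tOf (n : ℕ) (x : discSpace 1) : ℝ := (x.1 j0 + 1) * n / 2

lemma tOf_bounds (n : ℕ) (x : discSpace 1) : 0 ≤ tOf n x ∧ tOf n x ≤ n := by
  have h := abs_le.1 (disc1_abs_le x)
  have hn0 : (0:ℝ) ≤ n := Nat.cast_nonneg n
  constructor
  · rw [tOf]
    have : 0 ≤ (x.1 j0 + 1) * n := mul_nonneg (by linarith [h.1]) hn0
    linarith
  · rw [tOf]
    nlinarith [h.2]

lemma pathC_pair_mem {n : ℕ} {ι : ℕ → W} {k : ℕ} (h : k + 1 ≤ n) :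
    ({ι k, ι (k+1)} : Finset W) ∈ pathC n ι :=
  Or.inr ⟨k, by omega, rfl⟩

/-- Forward map. -/
noncomputable def pathTo (n : ℕ) (hn : 1 ≤ n) (ι : ℕ → W) (x : discSpace 1) :
    spc (pathC n ι) :=
  mkSpc (pathC_isComplex n ι) (pathPt ι (tOf n x) (kOf n (tOf n x)))
    (pathC_pair_mem (kOf_le hn (tOf_bounds n x).1 (tOf_bounds n x).2).2)
    (pathPt_support ι _ _)
    (pathPt_nonneg ι (kOf_le hn (tOf_bounds n x).1 (tOf_bounds n x).2).1.1
      (kOf_le hn (tOf_bounds n x).1 (tOf_bounds n x).2).1.2)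
    (pathPt_sum ι _ _)

lemma pathTo_coe (n : ℕ) (hn : 1 ≤ n) (ι : ℕ → W) (x : discSpace 1) :
    (pathTo n hn ι x).1 = pathPt ι (tOf n x) (kOf n (tOf n x)) := rfl

/-- The parameter functional. -/
noncomputable def Tf (n : ℕ) (ι : ℕ → W) (w : spc (pathC n ι)) : ℝ :=
  ∑ i ∈ Finset.range (n+1), (i:ℝ) * w.1 (ι i)

lemma sum_w_eq_one {n : ℕ} {ι : ℕ → W} (hι : ∀ i ≤ n, ∀ j ≤ n, ι i = ι j → i = j)
    (w : spc (pathC n ι)) : ∑ i ∈ Finset.range (n+1), w.1 (ι i) = 1 := by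
  have himg : w.1.support ⊆ (Finset.range (n+1)).image ι := by
    rcases w.2.1 with ⟨i, hi, hs⟩ | ⟨i, hi, hs⟩
    · rw [hs, Finset.singleton_subset_iff, Finset.mem_image]
      exact ⟨i, Finset.mem_range.2 (by omega), rfl⟩
    · rw [hs, Finset.insert_subset_iff, Finset.singleton_subset_iff, Finset.mem_image,
        Finset.mem_image]
      exact ⟨⟨i, Finset.mem_range.2 (by omega), rfl⟩, ⟨i+1, Finset.mem_range.2 (by omega), rfl⟩⟩
  have h1 : ∑ v ∈ w.1.support, w.1 v = ∑ v ∈ (Finset.range (n+1)).image ι, w.1 v :=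
    Finset.sum_subset himg (fun v _ hv => Finsupp.notMem_support_iff.1 hv)
  have h2 : ∑ v ∈ (Finset.range (n+1)).image ι, w.1 v
      = ∑ i ∈ Finset.range (n+1), w.1 (ι i) := by
    refine Finset.sum_image ?_
    intro i hi j hj hij
    have hi' := Finset.mem_range.1 hi
    have hj' := Finset.mem_range.1 hj
    exact hι i (by omega) j (by omega) hij
  have h3 := w.2.2.2
  rw [Finsupp.sum] at h3
  rw [← h2, ← h1, h3]

lemma Tf_bounds {n : ℕ} {ι : ℕ → W} (hι : ∀ i ≤ n, ∀ j ≤ n, ι i = ι j → i = j)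
    (w : spc (pathC n ι)) : 0 ≤ Tf n ι w ∧ Tf n ι w ≤ n := by
  constructor
  · refine Finset.sum_nonneg fun i _ => ?_
    exact mul_nonneg (Nat.cast_nonneg i) (w.2.2.1 _)
  · have h : Tf n ι w ≤ ∑ i ∈ Finset.range (n+1), (n:ℝ) * w.1 (ι i) := by
      refine Finset.sum_le_sum fun i hi => ?_
      refine mul_le_mul_of_nonneg_right ?_ (w.2.2.1 _)
      have hi' := Finset.mem_range.1 hi
      exact_mod_cast (by omega : i ≤ n)
    rw [← Finset.mul_sum, sum_w_eq_one hι w, mul_one] at h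
    exact h

/-- Inverse map. -/
noncomputable def pathFrom (n : ℕ) (hn : 1 ≤ n) (ι : ℕ → W)
    (hι : ∀ i ≤ n, ∀ j ≤ n, ι i = ι j → i = j) (w : spc (pathC n ι)) : discSpace 1 :=
  dpt (2 * Tf n ι w / n - 1) (by
    obtain ⟨h0, h1⟩ := Tf_bounds hι w
    have hnp : (0:ℝ) < n := by exact_mod_cast Nat.pos_of_ne_zero (by omega)
    rw [abs_le]
    constructor
    · have : 0 ≤ 2 * Tf n ι w / n := by positivity
      linarith
    · rw [sub_le_iff_le_add, div_le_iff₀ hnp]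
      linarith)

lemma tOf_pathFrom {n : ℕ} (hn : 1 ≤ n) {ι : ℕ → W}
    (hι : ∀ i ≤ n, ∀ j ≤ n, ι i = ι j → i = j) (w : spc (pathC n ι)) :
    tOf n (pathFrom n hn ι hι w) = Tf n ι w := by
  have hnp : (n:ℝ) ≠ 0 := by
    have : (0:ℝ) < n := by exact_mod_cast Nat.pos_of_ne_zero (by omega)
    linarith
  rw [tOf, pathFrom, dpt_val]
  field_simp
  ring

lemma sum_range_pair {n' a b : ℕ} (ha : a ∈ Finset.range n') (hb : b ∈ Finset.range n')
    (hab : a ≠ b) (g : ℕ → ℝ) (hz : ∀ i ∈ Finset.range n', i ≠ a → i ≠ b → g i = 0) :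
    ∑ i ∈ Finset.range n', g i = g a + g b := by
  rw [← Finset.sum_pair hab]
  refine (Finset.sum_subset ?_ ?_).symm
  · rw [Finset.insert_subset_iff, Finset.singleton_subset_iff]
    exact ⟨ha, hb⟩
  · intro x hx hnx
    refine hz x hx ?_ ?_
    · intro h; exact hnx (h ▸ Finset.mem_insert_self _ _)
    · intro h; exact hnx (h ▸ Finset.mem_insert_of_mem (Finset.mem_singleton_self _))

lemma kOf_natCast (n : ℕ) (i : ℕ) : kOf n (i:ℝ) = min i (n-1) := by
  rw [kOf, Nat.floor_natCast]

/-- `pathFrom` is a left inverse of `pathTo`. -/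
lemma path_left_inv {n : ℕ} (hn : 1 ≤ n) {ι : ℕ → W}
    (hι : ∀ i ≤ n, ∀ j ≤ n, ι i = ι j → i = j) (x : discSpace 1) :
    pathFrom n hn ι hι (pathTo n hn ι x) = x := by
  set t := tOf n x with htdef
  obtain ⟨⟨hk1, hk2⟩, hk3⟩ := kOf_le hn (tOf_bounds n x).1 (tOf_bounds n x).2
  set k := kOf n t with hkdef
  have hT : Tf n ι (pathTo n hn ι x) = t := by
    rw [Tf]
    have hval : ∀ i ≤ n, (pathTo n hn ι x).1 (ι i) = tent t i := by
      intro i hi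
      rw [pathTo_coe]
      exact pathPt_value hι hk1 hk2 hk3 hi
    rw [sum_range_pair (Finset.mem_range.2 (by omega)) (Finset.mem_range.2 (by omega))
      (by omega : k ≠ k + 1) _ ?_]
    · rw [hval k (by omega), hval (k+1) (by omega), tent_self hk1 hk2, tent_succ hk1 hk2]
      push_cast
      ring
    · intro i hi hik hik1
      have hi' := Finset.mem_range.1 hi
      rw [hval i (by omega), tent_far hk1 hk2 hik hik1, mul_zero]
  have hnp : (n:ℝ) ≠ 0 := by
    have : (0:ℝ) < n := by exact_mod_cast Nat.pos_of_ne_zero (by omega)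
    linarith
  apply Subtype.ext
  rw [show (pathFrom n hn ι hι (pathTo n hn ι x)).1
      = cst1 (2 * Tf n ι (pathTo n hn ι x) / n - 1) from rfl, hT, disc1_val x]
  congr 1
  rw [htdef, tOf]
  field_simp
  try ring

/-- `pathFrom` is a right inverse of `pathTo`. -/
lemma path_right_inv {n : ℕ} (hn : 1 ≤ n) {ι : ℕ → W}
    (hι : ∀ i ≤ n, ∀ j ≤ n, ι i = ι j → i = j) (w : spc (pathC n ι)) :
    pathTo n hn ι (pathFrom n hn ι hι w) = w := by
  have hcast : ((n - 1 : ℕ) : ℝ) = (n:ℝ) - 1 := by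
    push_cast [Nat.cast_sub hn]
    ring
  apply Subtype.ext
  rw [pathTo_coe, tOf_pathFrom hn hι]
  rcases w.2.1 with ⟨i, hi, hs⟩ | ⟨i, hi, hs⟩
  · -- support is a single vertex ι i
    have hwi : w.1 (ι i) = 1 := by
      have h3 := w.2.2.2
      rw [Finsupp.sum, hs, Finset.sum_singleton] at h3
      exact h3
    have hw0 : ∀ v, v ≠ ι i → w.1 v = 0 := by
      intro v hv
      by_contra h0
      have : v ∈ w.1.support := Finsupp.mem_support_iff.2 h0
      rw [hs, Finset.mem_singleton] at this
      exact hv this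
    have hT : Tf n ι w = i := by
      rw [Tf, Finset.sum_eq_single_of_mem i (Finset.mem_range.2 (by omega))]
      · rw [hwi, mul_one]
      · intro j hj hji
        have hj' := Finset.mem_range.1 hj
        rw [hw0 (ι j) (fun h => hji (hι j (by omega) i hi h)), mul_zero]
    rw [hT, kOf_natCast]
    by_cases hin : i ≤ n - 1
    · rw [min_eq_left hin]
      ext v
      rw [pathPt_apply]
      by_cases hv : v = ι i
      · subst hv
        rw [if_pos rfl, if_neg, hwi]
        · ring_nf
        · intro h
          have := hι (i+1) (by omega) i hi h
          omega
      · rw [hw0 v hv, if_neg (fun h => hv h.symm)]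
        have : (i:ℝ) - i = 0 := by ring
        rw [this]
        simp
    · have hin' : i = n := by omega
      rw [hin'] at hwi hw0 ⊢
      rw [min_eq_right (by omega)]
      ext v
      rw [pathPt_apply]
      have hv1 : (1 : ℝ) - ((n:ℝ) - (n-1:ℕ)) = 0 := by rw [hcast]; ring
      have hv2 : (n:ℝ) - ((n-1:ℕ):ℝ) = 1 := by rw [hcast]; ring
      have hsub : n - 1 + 1 = n := by omega
      by_cases hv : v = ι n
      · subst hv
        rw [hsub, if_pos rfl, hwi, hv1, hv2]
        by_cases h2 : ι (n-1) = ι n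
        · rw [if_pos h2]; ring
        · rw [if_neg h2]; ring
      · rw [hsub, hv1, hv2, hw0 v hv, if_neg (fun h : ι n = v => hv h.symm), ite_self]
        ring
  · -- support is an edge
    have hne : ι i ≠ ι (i+1) := by
      intro h
      have := hι i (by omega) (i+1) (by omega) h
      omega
    have hpq : w.1 (ι i) + w.1 (ι (i+1)) = 1 := by
      have h3 := w.2.2.2
      rw [Finsupp.sum, hs, Finset.sum_pair hne] at h3
      exact h3
    set p := w.1 (ι i) with hp
    set q := w.1 (ι (i+1)) with hq
    have hppos : 0 < p := by
      have : ι i ∈ w.1.support := by rw [hs]; exact Finset.mem_insert_self _ _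
      have h0 := Finsupp.mem_support_iff.1 this
      rcases lt_or_eq_of_le (w.2.2.1 (ι i)) with h | h
      · exact h
      · exact absurd h.symm h0
    have hqpos : 0 < q := by
      have : ι (i+1) ∈ w.1.support := by
        rw [hs]; exact Finset.mem_insert_of_mem (Finset.mem_singleton_self _)
      have h0 := Finsupp.mem_support_iff.1 this
      rcases lt_or_eq_of_le (w.2.2.1 (ι (i+1))) with h | h
      · exact h
      · exact absurd h.symm h0
    have hw0 : ∀ v, v ≠ ι i → v ≠ ι (i+1) → w.1 v = 0 := by
      intro v hv hv'
      by_contra h0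
      have : v ∈ w.1.support := Finsupp.mem_support_iff.2 h0
      rw [hs, Finset.mem_insert, Finset.mem_singleton] at this
      rcases this with h | h
      · exact hv h
      · exact hv' h
    have hT : Tf n ι w = i + q := by
      rw [Tf, sum_range_pair (Finset.mem_range.2 (by omega)) (Finset.mem_range.2 (by omega))
        (by omega : i ≠ i + 1) _ ?_]
      · push_cast
        rw [← hp, ← hq]
        nlinarith [hpq]
      · intro j hj hji hji1
        have : w.1 (ι j) = 0 := by
          refine hw0 (ι j) ?_ ?_
          · intro h
            have hj' := Finset.mem_range.1 hj
            exact hji (hι j (by omega) i (by omega) h)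
          · intro h
            have hj' := Finset.mem_range.1 hj
            exact hji1 (hι j (by omega) (i+1) (by omega) h)
        rw [this, mul_zero]
    have hfl : ⌊(i:ℝ) + q⌋₊ = i := by
      rw [Nat.floor_eq_iff (by positivity)]
      constructor
      · linarith
      · push_cast
        linarith [hpq, hppos]
    have hkOf : kOf n (Tf n ι w) = i := by
      rw [hT, kOf, hfl, min_eq_left (by omega)]
    rw [hkOf, hT]
    ext v
    rw [pathPt_apply]
    have hs1 : (i:ℝ) + q - i = q := by ring
    rw [hs1]
    by_cases hv : v = ι i
    · subst hv
      rw [if_pos rfl, if_neg (fun h => hne h.symm), ← hp]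
      linarith [hpq]
    · by_cases hv' : v = ι (i+1)
      · subst hv'
        rw [if_pos rfl, if_neg (fun h => hne h), ← hq]
        ring
      · rw [if_neg (fun h => hv h.symm), if_neg (fun h => hv' h.symm), hw0 v hv hv']
        ring

/-- Continuity of `pathTo`. -/
lemma pathTo_continuous (n : ℕ) (hn : 1 ≤ n) (ι : ℕ → W)
    (hι : ∀ i ≤ n, ∀ j ≤ n, ι i = ι j → i = j) : Continuous (pathTo n hn ι) := by
  have htcont : Continuous (tOf n) := by
    have h1 : Continuous (fun x : discSpace 1 => x.1 j0) := by
      have : Continuous (fun x : discSpace 1 => x.1) := by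
        unfold discSpace at *
        exact continuous_subtype_val
      exact (EuclideanSpace.proj (𝕜 := ℝ) j0).continuous.comp this
    unfold tOf
    exact ((h1.add continuous_const).mul continuous_const).div_const _
  refine continuous_into_spc _ fun v => ?_
  by_cases hv : ∃ i ≤ n, ι i = v
  · obtain ⟨i, hi, rfl⟩ := hv
    have heq : (fun x => (pathTo n hn ι x).1 (ι i)) = fun x => tent (tOf n x) i := by
      funext x
      obtain ⟨⟨hk1, hk2⟩, hk3⟩ := kOf_le hn (tOf_bounds n x).1 (tOf_bounds n x).2
      rw [pathTo_coe]
      exact pathPt_value hι hk1 hk2 hk3 hi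
    rw [heq]
    unfold tent
    exact continuous_const.max
      (continuous_const.sub (htcont.sub continuous_const).abs)
  · push_neg at hv
    have heq : (fun x => (pathTo n hn ι x).1 v) = fun _ => (0:ℝ) := by
      funext x
      obtain ⟨⟨hk1, hk2⟩, hk3⟩ := kOf_le hn (tOf_bounds n x).1 (tOf_bounds n x).2
      rw [pathTo_coe]
      exact pathPt_apply_of_ne ι _ _ (hv _ (by omega)) (hv _ (by omega))
    rw [heq]
    exact continuous_const

/-- The path complex realizes the 1-disc. -/
noncomputable def pathHomeo (n : ℕ) (hn : 1 ≤ n) (ι : ℕ → W)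
    (hι : ∀ i ≤ n, ∀ j ≤ n, ι i = ι j → i = j) : spc (pathC n ι) ≃ₜ discSpace 1 :=
  (Continuous.homeoOfEquivCompactToT2
    (f := ⟨pathTo n hn ι, pathFrom n hn ι hι, path_left_inv hn hι, path_right_inv hn hι⟩)
    (pathTo_continuous n hn ι hι)).symm

end Aux4b
section Aux4c
open Finsupp Function

variable {W : Type*}

lemma link_edge {n : ℕ} {ι : ℕ → W} (hι : ∀ i ≤ n, ∀ j ≤ n, ι i = ι j → i = j)
    {i : ℕ} (hi : i < n) : link (pathC n ι) {ι i, ι (i+1)} = ∅ := by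
  ext τ
  simp only [link, Set.mem_setOf_eq, Set.mem_empty_iff_false, iff_false, not_and]
  intro hτ hdisj hunion
  have hcard := pathC_card_le hunion
  have hτne : τ ≠ ∅ := (pathC_isComplex n ι _ hτ).1
  have hτpos : 1 ≤ τ.card := Finset.card_pos.2 (Finset.nonempty_of_ne_empty hτne)
  have hne : ι i ≠ ι (i+1) := by
    intro h
    have := hι i (by omega) (i+1) (by omega) h
    omega
  have hcard2 : ({ι i, ι (i+1)} : Finset W).card = 2 := Finset.card_pair hne
  rw [Finset.card_union_of_disjoint hdisj, hcard2] at hcard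
  omega

/-- What a singleton can link to. -/
lemma link_vertex_mem {n : ℕ} {ι : ℕ → W} (hι : ∀ i ≤ n, ∀ j ≤ n, ι i = ι j → i = j)
    {i : ℕ} (hi : i ≤ n) {τ : Finset W} (h : τ ∈ link (pathC n ι) {ι i}) :
    ∃ j ≤ n, τ = {ι j} ∧ ((1 ≤ i ∧ j = i - 1) ∨ (i + 1 ≤ n ∧ j = i + 1)) := by
  obtain ⟨hτ, hdisj, hunion⟩ := h
  rcases hτ with ⟨j, hj, rfl⟩ | ⟨j, hj, rfl⟩
  · have hij : ι i ≠ ι j := by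
      intro h
      have := Finset.disjoint_left.1 hdisj (Finset.mem_singleton_self (ι i))
      exact this (h ▸ Finset.mem_singleton_self (ι j))
    have hji : j ≠ i := fun h => hij (by rw [h])
    rw [← Finset.insert_eq] at hunion
    rcases hunion with ⟨l, hl, hEq⟩ | ⟨l, hl, hEq⟩
    · exfalso
      have h1 : ι i ∈ ({ι l} : Finset W) := hEq ▸ Finset.mem_insert_self _ _
      have h2 : ι j ∈ ({ι l} : Finset W) :=
        hEq ▸ Finset.mem_insert_of_mem (Finset.mem_singleton_self _)
      rw [Finset.mem_singleton] at h1 h2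
      exact hij (h1.trans h2.symm)
    · have h1 : ι i ∈ ({ι l, ι (l+1)} : Finset W) := hEq ▸ Finset.mem_insert_self _ _
      have h2 : ι j ∈ ({ι l, ι (l+1)} : Finset W) :=
        hEq ▸ Finset.mem_insert_of_mem (Finset.mem_singleton_self _)
      have hi' : i = l ∨ i = l + 1 := by
        rcases Finset.mem_insert.1 h1 with h | h
        · exact Or.inl (hι i hi l (by omega) h)
        · rw [Finset.mem_singleton] at h
          exact Or.inr (hι i hi (l+1) (by omega) h)
      have hj' : j = l ∨ j = l + 1 := by
        rcases Finset.mem_insert.1 h2 with h | h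
        · exact Or.inl (hι j hj l (by omega) h)
        · rw [Finset.mem_singleton] at h
          exact Or.inr (hι j hj (l+1) (by omega) h)
      refine ⟨j, hj, rfl, ?_⟩
      rcases hi' with rfl | rfl
      · rcases hj' with rfl | rfl
        · omega
        · right; omega
      · rcases hj' with rfl | rfl
        · left; omega
        · omega
  · exfalso
    have hcard := pathC_card_le hunion
    have hne : ι j ≠ ι (j+1) := by
      intro h
      have := hι j (by omega) (j+1) (by omega) h
      omega
    have hcard2 : ({ι j, ι (j+1)} : Finset W).card = 2 := Finset.card_pair hne
    rw [Finset.card_union_of_disjoint hdisj, Finset.card_singleton, hcard2] at hcard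
    omega

lemma singleton_mem_link_vertex {n : ℕ} {ι : ℕ → W}
    (hι : ∀ i ≤ n, ∀ j ≤ n, ι i = ι j → i = j) {i j : ℕ} (hi : i ≤ n) (hj : j ≤ n)
    (hadj : j + 1 = i ∨ i + 1 = j) : ({ι j} : Finset W) ∈ link (pathC n ι) {ι i} := by
  have hij : i ≠ j := by omega
  refine ⟨Or.inl ⟨j, hj, rfl⟩, ?_, ?_⟩
  · rw [Finset.disjoint_singleton]
    intro h
    exact hij (hι i hi j hj h)
  · rw [← Finset.insert_eq]
    rcases hadj with h | h
    · exact Or.inr ⟨j, by omega, by rw [h, Finset.pair_comm]⟩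
    · exact Or.inr ⟨i, by omega, by rw [h]⟩

lemma link_v0 {n : ℕ} (hn : 1 ≤ n) {ι : ℕ → W}
    (hι : ∀ i ≤ n, ∀ j ≤ n, ι i = ι j → i = j) :
    link (pathC n ι) {ι 0} = {({ι 1} : Finset W)} := by
  ext τ
  constructor
  · intro h
    obtain ⟨j, hj, rfl, hcase⟩ := link_vertex_mem hι (by omega) h
    rcases hcase with ⟨h1, _⟩ | ⟨_, rfl⟩
    · omega
    · rfl
  · intro h
    rw [Set.mem_singleton_iff] at h
    subst h
    exact singleton_mem_link_vertex hι (by omega) (by omega) (by omega)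

lemma link_vn {n : ℕ} (hn : 1 ≤ n) {ι : ℕ → W}
    (hι : ∀ i ≤ n, ∀ j ≤ n, ι i = ι j → i = j) :
    link (pathC n ι) {ι n} = {({ι (n-1)} : Finset W)} := by
  ext τ
  constructor
  · intro h
    obtain ⟨j, hj, rfl, hcase⟩ := link_vertex_mem hι (by omega) h
    rcases hcase with ⟨_, rfl⟩ | ⟨h1, _⟩
    · rfl
    · omega
  · intro h
    rw [Set.mem_singleton_iff] at h
    subst h
    exact singleton_mem_link_vertex hι (by omega) (by omega) (by omega)

lemma link_vmid {n : ℕ} {ι : ℕ → W}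
    (hι : ∀ i ≤ n, ∀ j ≤ n, ι i = ι j → i = j) {i : ℕ} (h0 : 0 < i) (hin : i < n) :
    link (pathC n ι) {ι i} = {({ι (i-1)} : Finset W), {ι (i+1)}} := by
  ext τ
  constructor
  · intro h
    obtain ⟨j, hj, rfl, hcase⟩ := link_vertex_mem hι (by omega) h
    rcases hcase with ⟨_, rfl⟩ | ⟨_, rfl⟩
    · exact Set.mem_insert _ _
    · exact Set.mem_insert_of_mem _ rfl
  · intro h
    rcases Set.mem_insert_iff.1 h with rfl | h
    · exact singleton_mem_link_vertex hι (by omega) (by omega) (by omega)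
    · rw [Set.mem_singleton_iff] at h
      subst h
      exact singleton_mem_link_vertex hι (by omega) (by omega) (by omega)

lemma pathC_isCombTriDisc {n : ℕ} (hn : 1 ≤ n) {ι : ℕ → W}
    (hι : ∀ i ≤ n, ∀ j ≤ n, ι i = ι j → i = j) : IsCombTriDisc 1 (pathC n ι) := by
  refine ⟨pathC_isComplex n ι, ⟨pathHomeo n hn ι hι⟩, ?_⟩
  intro σ hσ
  rcases hσ with ⟨i, hi, rfl⟩ | ⟨i, hi, rfl⟩
  · have hcard : ((1:ℤ) - ({ι i} : Finset W).card) = 0 := by simp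
    rw [hcard]
    by_cases h0 : i = 0
    · subst h0
      right
      rw [link_v0 hn hι]
      exact ⟨onePointHomeo (ι 1)⟩
    · by_cases hnn : i = n
      · right
        rw [hnn, link_vn hn hι]
        exact ⟨onePointHomeo (ι (n-1))⟩
      · left
        rw [link_vmid hι (by omega) (by omega)]
        have hne : ι (i-1) ≠ ι (i+1) := by
          intro h
          have := hι (i-1) (by omega) (i+1) (by omega) h
          omega
        exact ⟨twoPointHomeo hne⟩
  · left
    have hne : ι i ≠ ι (i+1) := by
      intro h
      have := hι i (by omega) (i+1) (by omega) h
      omega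
    have hcard : ((1:ℤ) - (({ι i, ι (i+1)} : Finset W).card : ℤ)) = -1 := by
      rw [Finset.card_pair hne]
      norm_num
    rw [link_edge hι (by omega), hcard]
    exact ⟨emptySphereHomeo (by norm_num)⟩

lemma not_sphere_of_singleton {a : W} :
    ¬ Nonempty (spc ({({a} : Finset W)} : Set (Finset W)) ≃ₜ sphereSpace 0) := by
  rintro ⟨e⟩
  have h1 : e.symm (spt 1 (by norm_num)) = e.symm (spt (-1) (by norm_num)) :=
    Subsingleton.elim _ _
  have := congrArg e h1
  rw [Homeomorph.apply_symm_apply, Homeomorph.apply_symm_apply] at this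
  exact spt_ne this

lemma pathC_boundary {n : ℕ} (hn : 1 ≤ n) {ι : ℕ → W}
    (hι : ∀ i ≤ n, ∀ j ≤ n, ι i = ι j → i = j) :
    discBoundary 1 (pathC n ι) = {({ι 0} : Finset W), {ι n}} := by
  ext σ
  simp only [discBoundary, Set.mem_setOf_eq]
  constructor
  · rintro ⟨hσ, hns⟩
    rcases hσ with ⟨i, hi, rfl⟩ | ⟨i, hi, rfl⟩
    · by_cases h0 : i = 0
      · subst h0; exact Set.mem_insert _ _
      · by_cases hnn : i = n
        · subst hnn; exact Set.mem_insert_of_mem _ rfl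
        · exfalso
          apply hns
          have hcard : ((1:ℤ) - ({ι i} : Finset W).card) = 0 := by simp
          rw [hcard, link_vmid hι (by omega) (by omega)]
          have hne : ι (i-1) ≠ ι (i+1) := by
            intro h
            have := hι (i-1) (by omega) (i+1) (by omega) h
            omega
          exact ⟨twoPointHomeo hne⟩
    · exfalso
      apply hns
      have hne : ι i ≠ ι (i+1) := by
        intro h
        have := hι i (by omega) (i+1) (by omega) h
        omega
      have hcard : ((1:ℤ) - (({ι i, ι (i+1)} : Finset W).card : ℤ)) = -1 := by
        rw [Finset.card_pair hne]
        norm_num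
      rw [link_edge hι (by omega), hcard]
      exact ⟨emptySphereHomeo (by norm_num)⟩
  · intro h
    rcases Set.mem_insert_iff.1 h with rfl | h
    · refine ⟨Or.inl ⟨0, by omega, rfl⟩, ?_⟩
      have hcard : ((1:ℤ) - ({ι 0} : Finset W).card) = 0 := by simp
      rw [hcard, link_v0 hn hι]
      exact not_sphere_of_singleton
    · rw [Set.mem_singleton_iff] at h
      subst h
      refine ⟨Or.inl ⟨n, le_rfl, rfl⟩, ?_⟩
      have hcard : ((1:ℤ) - ({ι n} : Finset W).card) = 0 := by simp
      rw [hcard, link_vn hn hι]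
      exact not_sphere_of_singleton

end Aux4c
section Aux5
open Finsupp Function

variable {V : Type*} {K : Set (Finset V)}

lemma vertex_of_mem (hK : IsComplex K) {σ : Finset V} (hσ : σ ∈ K) {v : V} (hv : v ∈ σ) :
    ({v} : Finset V) ∈ K :=
  (hK σ hσ).2 _ (Finset.singleton_subset_iff.2 hv) (by simp)

lemma K_empty_of_sphere_neg {m : ℤ} (hm : m < 0) (hK : IsComplex K)
    (he : Nonempty (spc K ≃ₜ sphereSpace m)) : K = ∅ := by
  obtain ⟨e⟩ := he
  haveI := sphereSpace_isEmpty hm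
  haveI : IsEmpty (spc K) := Function.isEmpty e
  by_contra h
  obtain ⟨σ, hσ⟩ := Set.nonempty_iff_ne_empty.2 h
  obtain ⟨v, hv⟩ := Finset.nonempty_of_ne_empty (hK σ hσ).1
  exact IsEmpty.false (vtx K v (vertex_of_mem hK hσ hv))

noncomputable def midPt (hK : IsComplex K) {σ : Finset V} (hσ : σ ∈ K) {u v : V}
    (hu : u ∈ σ) (hv : v ∈ σ) (huv : u ≠ v) : spc K :=
  mkSpc hK (Finsupp.single u (1/2) + Finsupp.single v (1/2))
    ((hK σ hσ).2 {u, v} (by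
      rw [Finset.insert_subset_iff, Finset.singleton_subset_iff]
      exact ⟨hu, hv⟩) (by simp))
    (Finsupp.support_add.trans (Finset.union_subset
      (Finsupp.support_single_subset.trans (by simp))
      (Finsupp.support_single_subset.trans (by simp))))
    (fun w => by
      rw [Finsupp.add_apply, Finsupp.single_apply, Finsupp.single_apply]
      split <;> split <;> norm_num)
    (by
      rw [Finsupp.sum_add_index' (fun _ => rfl) (fun _ c₁ c₂ => rfl),
        Finsupp.sum_single_index rfl, Finsupp.sum_single_index rfl]
      norm_num)

lemma midPt_apply_left (hK : IsComplex K) {σ : Finset V} (hσ : σ ∈ K) {u v : V}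
    (hu : u ∈ σ) (hv : v ∈ σ) (huv : u ≠ v) : (midPt hK hσ hu hv huv).1 u = 1/2 := by
  show (Finsupp.single u (1/2) + Finsupp.single v (1/2) : V →₀ ℝ) u = 1/2
  rw [Finsupp.add_apply, Finsupp.single_apply, Finsupp.single_apply, if_pos rfl,
    if_neg huv.symm, add_zero]

lemma midPt_apply_right (hK : IsComplex K) {σ : Finset V} (hσ : σ ∈ K) {u v : V}
    (hu : u ∈ σ) (hv : v ∈ σ) (huv : u ≠ v) : (midPt hK hσ hu hv huv).1 v = 1/2 := by
  show (Finsupp.single u (1/2) + Finsupp.single v (1/2) : V →₀ ℝ) v = 1/2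
  rw [Finsupp.add_apply, Finsupp.single_apply, Finsupp.single_apply, if_pos rfl,
    if_neg huv, zero_add]

lemma sphere0_shape (hK : IsComplex K) (e : spc K ≃ₜ sphereSpace 0) :
    ∃ a b : V, a ≠ b ∧ K = {({a} : Finset V), {b}} := by
  have htwo : ∀ x : spc K, x = e.symm (spt 1 (by norm_num)) ∨
      x = e.symm (spt (-1) (by norm_num)) := by
    intro x
    rcases sphere0_cases (e x) with h | h
    · left; rw [← h, Homeomorph.symm_apply_apply]
    · right; rw [← h, Homeomorph.symm_apply_apply]
  have hsing : ∀ σ ∈ K, ∃ c, σ = {c} := by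
    intro σ hσ
    have hcard : σ.card ≤ 1 := by
      rw [Finset.card_le_one]
      intro u hu v hv
      by_contra huv
      have d12 : vtx K u (vertex_of_mem hK hσ hu) ≠ vtx K v (vertex_of_mem hK hσ hv) :=
        vtx_ne huv _ _
      have d13 : vtx K u (vertex_of_mem hK hσ hu) ≠ midPt hK hσ hu hv huv := by
        intro h
        have h2 : (vtx K u (vertex_of_mem hK hσ hu)).1 u = (midPt hK hσ hu hv huv).1 u := by
          rw [h]
        rw [show (vtx K u (vertex_of_mem hK hσ hu)).1 u = 1 by
          rw [vtx_coe, Finsupp.single_apply, if_pos rfl]] at h2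
        rw [midPt_apply_left hK hσ hu hv huv] at h2
        norm_num at h2
      have d23 : vtx K v (vertex_of_mem hK hσ hv) ≠ midPt hK hσ hu hv huv := by
        intro h
        have h2 : (vtx K v (vertex_of_mem hK hσ hv)).1 v = (midPt hK hσ hu hv huv).1 v := by
          rw [h]
        rw [show (vtx K v (vertex_of_mem hK hσ hv)).1 v = 1 by
          rw [vtx_coe, Finsupp.single_apply, if_pos rfl]] at h2
        rw [midPt_apply_right hK hσ hu hv huv] at h2
        norm_num at h2
      rcases htwo (vtx K u (vertex_of_mem hK hσ hu)) with h1 | h1 <;>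
        rcases htwo (vtx K v (vertex_of_mem hK hσ hv)) with h2 | h2 <;>
        rcases htwo (midPt hK hσ hu hv huv) with h3 | h3
      · exact d12 (h1.trans h2.symm)
      · exact d12 (h1.trans h2.symm)
      · exact d13 (h1.trans h3.symm)
      · exact d23 (h2.trans h3.symm)
      · exact d23 (h2.trans h3.symm)
      · exact d13 (h1.trans h3.symm)
      · exact d12 (h1.trans h2.symm)
      · exact d12 (h1.trans h2.symm)
    have hne : σ.Nonempty := Finset.nonempty_of_ne_empty (hK σ hσ).1
    have : σ.card = 1 := le_antisymm hcard (Finset.card_pos.2 hne)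
    exact Finset.card_eq_one.1 this
  set w1 := e.symm (spt 1 (by norm_num)) with hw1def
  set w2 := e.symm (spt (-1) (by norm_num)) with hw2def
  obtain ⟨a, ha⟩ := hsing _ w1.2.1
  obtain ⟨b, hb⟩ := hsing _ w2.2.1
  have hw1 : w1.1 = Finsupp.single a 1 := eq_single_of_support_singleton w1 ha
  have hw2 : w2.1 = Finsupp.single b 1 := eq_single_of_support_singleton w2 hb
  have haK : ({a} : Finset V) ∈ K := ha ▸ w1.2.1
  have hbK : ({b} : Finset V) ∈ K := hb ▸ w2.2.1
  have hw1v : w1 = vtx K a haK := Subtype.ext hw1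
  have hw2v : w2 = vtx K b hbK := Subtype.ext hw2
  have hab : a ≠ b := by
    rintro rfl
    have h12 : w1 = w2 := Subtype.ext (hw1.trans hw2.symm)
    have := congrArg e h12
    rw [hw1def, hw2def, Homeomorph.apply_symm_apply, Homeomorph.apply_symm_apply] at this
    exact spt_ne this
  refine ⟨a, b, hab, ?_⟩
  ext σ
  constructor
  · intro hσ
    obtain ⟨c, rfl⟩ := hsing σ hσ
    rcases htwo (vtx K c hσ) with h | h
    · rw [hw1v] at h
      have : c = a := vtx_inj _ _ h
      rw [this]
      exact Set.mem_insert _ _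
    · rw [hw2v] at h
      have : c = b := vtx_inj _ _ h
      rw [this]
      exact Set.mem_insert_of_mem _ rfl
  · intro h
    rcases Set.mem_insert_iff.1 h with rfl | h
    · exact haK
    · rw [Set.mem_singleton_iff] at h
      subst h
      exact hbK

/-- Extracting a walk from reflexive-transitive closure. -/
lemma rtg_to_walk {U : Type*} {X : Set (Finset U)} {u u' : U}
    (h : Relation.ReflTransGen (eRel X) u u') :
    ∃ (n : ℕ) (x : ℕ → U), x 0 = u ∧ x n = u' ∧ ∀ i < n, eRel X (x i) (x (i+1)) := by
  induction h with
  | refl => exact ⟨0, fun _ => u, rfl, rfl, by omega⟩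
  | @tail c d hcd hstep ih =>
    obtain ⟨n, x, h0, hn, hs⟩ := ih
    refine ⟨n+1, fun i => if i = n+1 then d else x i, ?_, by simp, ?_⟩
    · show (if 0 = n+1 then d else x 0) = u
      rw [if_neg (by omega)]
      exact h0
    · intro i hi
      show eRel X (if i = n+1 then d else x i) (if i+1 = n+1 then d else x (i+1))
      by_cases hin : i = n
      · subst hin
        rw [if_neg (by omega), if_pos rfl, hn]
        exact hstep
      · rw [if_neg (by omega), if_neg (by omega)]
        exact hs i (by omega)

/-- The one-point complex: its link is empty. -/
lemma link_onePoint {a : V} :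
    link ({({a} : Finset V)} : Set (Finset V)) {a} = ∅ := by
  ext τ
  simp only [link, Set.mem_setOf_eq, Set.mem_empty_iff_false, iff_false, not_and]
  intro hτ hdisj
  rw [Set.mem_singleton_iff] at hτ
  subst hτ
  intro _
  have := Finset.disjoint_left.1 hdisj (Finset.mem_singleton_self a)
  exact this (Finset.mem_singleton_self a)

lemma onePoint_isComplex (a : V) : IsComplex ({({a} : Finset V)} : Set (Finset V)) := by
  intro σ hσ
  rw [Set.mem_singleton_iff] at hσ
  subst hσ
  refine ⟨by simp, fun τ hτ hne => ?_⟩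
  rcases Finset.subset_singleton_iff.1 hτ with rfl | rfl
  · exact absurd rfl hne
  · rfl

/-- The two-point complex is a combinatorial 0-sphere. -/
lemma twoPoint_isComplex {a b : V} :
    IsComplex ({({a} : Finset V), {b}} : Set (Finset V)) := by
  intro σ hσ
  rcases Set.mem_insert_iff.1 hσ with rfl | hσ
  · refine ⟨by simp, fun τ hτ hne => ?_⟩
    rcases Finset.subset_singleton_iff.1 hτ with rfl | rfl
    · exact absurd rfl hne
    · exact Set.mem_insert _ _
  · rw [Set.mem_singleton_iff] at hσ
    subst hσ
    refine ⟨by simp, fun τ hτ hne => ?_⟩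
    rcases Finset.subset_singleton_iff.1 hτ with rfl | rfl
    · exact absurd rfl hne
    · exact Set.mem_insert_of_mem _ rfl

lemma link_twoPoint_left {a b : V} (hab : a ≠ b) :
    link ({({a} : Finset V), {b}} : Set (Finset V)) {a} = ∅ := by
  ext τ
  simp only [link, Set.mem_setOf_eq, Set.mem_empty_iff_false, iff_false, not_and]
  intro hτ hdisj hunion
  rcases Set.mem_insert_iff.1 hτ with rfl | hτ
  · have := Finset.disjoint_left.1 hdisj (Finset.mem_singleton_self a)
    exact this (Finset.mem_singleton_self a)
  · rw [Set.mem_singleton_iff] at hτ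
    subst hτ
    rw [← Finset.insert_eq] at hunion
    rcases Set.mem_insert_iff.1 hunion with h | h
    · have : b ∈ ({a} : Finset V) := h ▸ Finset.mem_insert_of_mem (Finset.mem_singleton_self b)
      rw [Finset.mem_singleton] at this
      exact hab this.symm
    · rw [Set.mem_singleton_iff] at h
      have : a ∈ ({b} : Finset V) := h ▸ Finset.mem_insert_self a {b}
      rw [Finset.mem_singleton] at this
      exact hab this
  
lemma link_twoPoint_right {a b : V} (hab : a ≠ b) :
    link ({({a} : Finset V), {b}} : Set (Finset V)) {b} = ∅ := by
  ext τ
  simp only [link, Set.mem_setOf_eq, Set.mem_empty_iff_false, iff_false, not_and]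
  intro hτ hdisj hunion
  rcases Set.mem_insert_iff.1 hτ with rfl | hτ
  · rw [← Finset.insert_eq] at hunion
    rcases Set.mem_insert_iff.1 hunion with h | h
    · have : b ∈ ({a} : Finset V) := h ▸ Finset.mem_insert_self b {a}
      rw [Finset.mem_singleton] at this
      exact hab this.symm
    · rw [Set.mem_singleton_iff] at h
      have : a ∈ ({b} : Finset V) := h ▸ Finset.mem_insert_of_mem (Finset.mem_singleton_self a)
      rw [Finset.mem_singleton] at this
      exact hab this
  · rw [Set.mem_singleton_iff] at hτ
    subst hτ
    have := Finset.disjoint_left.1 hdisj (Finset.mem_singleton_self b)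
    exact this (Finset.mem_singleton_self b)

lemma twoPoint_isCombTriSphere {a b : V} (hab : a ≠ b) :
    IsCombTriSphere 0 ({({a} : Finset V), {b}} : Set (Finset V)) := by
  refine ⟨twoPoint_isComplex, ⟨twoPointHomeo hab⟩, ?_⟩
  intro σ hσ
  rcases Set.mem_insert_iff.1 hσ with rfl | hσ
  · have hcard : ((0:ℤ) - ({a} : Finset V).card) = -1 := by simp
    rw [hcard, link_twoPoint_left hab]
    exact ⟨emptySphereHomeo (by norm_num)⟩
  · rw [Set.mem_singleton_iff] at hσ
    subst hσ
    have hcard : ((0:ℤ) - ({b} : Finset V).card) = -1 := by simp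
    rw [hcard, link_twoPoint_right hab]
    exact ⟨emptySphereHomeo (by norm_num)⟩

end Aux5
section Aux6
open Finsupp Function

lemma eRel_map {V U : Type*} {K : Set (Finset V)} {X : Set (Finset U)} {F : V → U}
    (hF : IsSimplicial K X F) (hloc : LocInj K F) {a b : V} (h : eRel K a b) :
    eRel X (F a) (F b) := by
  have himg : ({a, b} : Finset V).image F ∈ X := hF _ h.2
  have hcard : (({a, b} : Finset V).image F).card = 2 := by
    rw [hloc _ h.2, Finset.card_pair h.1]
  have himg2 : ({a, b} : Finset V).image F = {F a, F b} := by
    rw [Finset.image_insert, Finset.image_singleton]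
  refine ⟨?_, by rwa [himg2] at himg⟩
  intro hFeq
  rw [himg2, hFeq] at hcard
  simp at hcard

lemma image_singleton' {α β : Type*} {instβ : DecidableEq β} (f : α → β) (a : α) :
    @Finset.image _ _ instβ f {a} = {f a} :=
  @Finset.image_singleton _ _ instβ f a

lemma image_pair' {α β : Type*} {instα : DecidableEq α} {instβ : DecidableEq β}
    (f : α → β) (a b : α) :
    @Finset.image _ _ instβ f (@insert _ _ (@Finset.instInsert _ instα) a {b})
      = @insert _ _ (@Finset.instInsert _ instβ) (f a) {f b} := by
  letI := instα
  letI := instβ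
  rw [Finset.image_insert, Finset.image_singleton]

lemma card_pair' {α : Type*} {instα : DecidableEq α} {a b : α} (h : a ≠ b) :
    (@insert _ _ (@Finset.instInsert _ instα) a {b}).card = 2 := by
  letI := instα
  exact Finset.card_pair h

end Aux6

/-- A simplicial complex `X` has the disc local injectivity property
up to dimension `0` if and only if `X` is nonempty, connected, and has more than one
vertex. -/
theorem stmt2 {U : Type} (X : Set (Finset U)) (hX : IsComplex X) :
    HasDiscLII X 0 ↔
      (X.Nonempty ∧ ConnectedSpace (spc X) ∧
        ∃ a b : U, a ≠ b ∧ ({a} : Finset U) ∈ X ∧ ({b} : Finset U) ∈ X) := by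
  constructor
  · intro h
    -- X is nonempty
    have hXne : X.Nonempty := by
      have hsph : IsCombTriSphere (-1) (∅ : Set (Finset PEmpty)) := by
        refine ⟨fun σ hσ => absurd hσ (Set.notMem_empty σ), ⟨?_⟩,
          fun σ hσ => absurd hσ (Set.notMem_empty σ)⟩
        haveI := spc_empty_isEmpty (V := PEmpty)
        haveI := sphereSpace_isEmpty (show (-1:ℤ) < 0 by norm_num)
        exact homeoOfIsEmpty
      obtain ⟨W, L, j, F, hL, hj, himg, hbd, hFj, hsimp, hloc⟩ :=
        h (-1) (by norm_num) PEmpty ∅ (fun v => v.elim) hsph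
          (fun σ hσ => absurd hσ (Set.notMem_empty σ))
          (fun σ hσ => absurd hσ (Set.notMem_empty σ))
      obtain ⟨e⟩ := hL.2.1
      have hpt : discSpace (-1 + 1) := by
        rw [show ((-1:ℤ) + 1) = 0 by norm_num]
        exact d0
      obtain ⟨w⟩ : Nonempty (spc L) := ⟨e.symm hpt⟩
      exact ⟨_, hsimp _ w.2.1⟩
    obtain ⟨σ₀, hσ₀⟩ := hXne
    obtain ⟨u₀, hu₀⟩ := Finset.nonempty_of_ne_empty (hX σ₀ hσ₀).1
    have hu₀X : ({u₀} : Finset U) ∈ X := vertex_of_mem hX hσ₀ hu₀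
    -- any two vertices are connected by an edge path, and there is a neighbouring pair
    have key : ∀ u u' : U, ({u}:Finset U) ∈ X → ({u'}:Finset U) ∈ X →
        Relation.ReflTransGen (eRel X) u u' ∧
          ∃ c, eRel X u c := by
      intro u u' hu hu'
      obtain ⟨W, L, j, F, hL, hj, himg, hbd, hFj, hsimp, hloc⟩ :=
        h 0 le_rfl Bool ({({true} : Finset Bool), {false}}) (fun c => cond c u u')
          (twoPoint_isCombTriSphere (by decide))
          (by
            intro σ hσ
            rcases Set.mem_insert_iff.1 hσ with rfl | hσ
            · rw [Finset.image_singleton]; exact hu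
            · rw [Set.mem_singleton_iff] at hσ
              subst hσ
              rw [Finset.image_singleton]; exact hu')
          (by
            intro σ hσ
            rcases Set.mem_insert_iff.1 hσ with rfl | hσ
            · rw [Finset.image_singleton]; simp
            · rw [Set.mem_singleton_iff] at hσ
              subst hσ
              rw [Finset.image_singleton]; simp)
      obtain ⟨e⟩ := hL.2.1
      have he1 : Nonempty (spc L ≃ₜ discSpace 1) := by
        rw [show (1:ℤ) = 0 + 1 by norm_num]
        exact ⟨e⟩
      obtain ⟨e1⟩ := he1
      haveI : ConnectedSpace (spc L) :=
        e1.symm.surjective.connectedSpace e1.symm.continuous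
      have hjt : ({j true} : Finset W) ∈ L := by
        have := himg {true} (Set.mem_insert _ _)
        rwa [Finset.image_singleton] at this
      have hjf : ({j false} : Finset W) ∈ L := by
        have := himg {false} (Set.mem_insert_of_mem _ rfl)
        rwa [Finset.image_singleton] at this
      have hrtgL := vertices_reachable hL.1 hjt hjf
      constructor
      · have h2 := rtg_map hsimp hloc hrtgL
        rw [hFj true, hFj false] at h2
        exact h2
      · rcases Relation.ReflTransGen.cases_head hrtgL with heq | ⟨c, hstep, _⟩
        · exact absurd (hj heq) (by decide)
        · have h2 := eRel_map hsimp hloc hstep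
          rw [hFj true] at h2
          exact ⟨F c, h2⟩
    have hverts : ∃ a b : U, a ≠ b ∧ ({a} : Finset U) ∈ X ∧ ({b} : Finset U) ∈ X := by
      obtain ⟨c, hc⟩ := (key u₀ u₀ hu₀X hu₀X).2
      exact ⟨u₀, c, hc.1, hu₀X, eRel_vtx_right hX hc⟩
    have hconn : ConnectedSpace (spc X) :=
      spc_connected hX hu₀X (fun u v hu hv => (key u v hu hv).1)
    exact ⟨⟨σ₀, hσ₀⟩, hconn, hverts⟩
  · rintro ⟨hne, hconn, a0, b0, hab0, ha0, hb0⟩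
    intro m hm V K f hK hsimp hloc
    obtain ⟨σ₀, hσ₀⟩ := hne
    obtain ⟨u₀, hu₀⟩ := Finset.nonempty_of_ne_empty (hX σ₀ hσ₀).1
    have hu₀X : ({u₀} : Finset U) ∈ X := vertex_of_mem hX hσ₀ hu₀
    rcases (show m ≤ -2 ∨ m = -1 ∨ m = 0 by omega) with hm2 | hm1 | hm0
    · -- m ≤ -2 : everything is empty
      have hKempty : K = ∅ := K_empty_of_sphere_neg (by omega) hK.1 hK.2.1
      subst hKempty
      refine ⟨V, ∅, id, f, ?_, Function.injective_id, ?_, ?_, fun v => rfl, ?_, ?_⟩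
      · refine ⟨fun σ hσ => absurd hσ (Set.notMem_empty σ), ⟨?_⟩,
          fun σ hσ => absurd hσ (Set.notMem_empty σ)⟩
        haveI := spc_empty_isEmpty (V := V)
        haveI := discSpace_isEmpty (show m + 1 < 0 by omega)
        exact homeoOfIsEmpty
      · intro σ hσ; exact absurd hσ (Set.notMem_empty σ)
      · rw [Set.image_empty]
        ext σ
        simp [discBoundary]
      · intro σ hσ; exact absurd hσ (Set.notMem_empty σ)
      · intro σ hσ; exact absurd hσ (Set.notMem_empty σ)
    · -- m = -1 : cone off with a single point
      subst hm1
      have hKempty : K = ∅ := K_empty_of_sphere_neg (by norm_num) hK.1 hK.2.1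
      subst hKempty
      refine ⟨V ⊕ Unit, {({Sum.inr ()} : Finset (V ⊕ Unit))}, Sum.inl,
        Sum.elim f (fun _ => u₀), ?_, Sum.inl_injective, ?_, ?_, fun v => rfl, ?_, ?_⟩
      · refine ⟨onePoint_isComplex _, ⟨?_⟩, ?_⟩
        · rw [show ((-1:ℤ) + 1) = 0 by norm_num]
          exact onePointHomeo _
        · intro σ hσ
          rw [Set.mem_singleton_iff] at hσ
          subst hσ
          left
          have hcard : ((-1:ℤ) + 1 - ({Sum.inr ()} : Finset (V ⊕ Unit)).card) = -1 := by
            simp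
          rw [hcard, link_onePoint]
          exact ⟨emptySphereHomeo (by norm_num)⟩
      · intro σ hσ; exact absurd hσ (Set.notMem_empty σ)
      · rw [Set.image_empty]
        ext σ
        simp only [discBoundary, Set.mem_setOf_eq, Set.mem_empty_iff_false, false_iff,
          not_and]
        intro hσ hns
        rw [Set.mem_singleton_iff] at hσ
        subst hσ
        apply hns
        have hcard : ((-1:ℤ) + 1 - ({Sum.inr ()} : Finset (V ⊕ Unit)).card) = -1 := by
          simp
        rw [hcard, link_onePoint]
        exact ⟨emptySphereHomeo (by norm_num)⟩
      · intro σ hσ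
        rw [Set.mem_singleton_iff] at hσ
        subst hσ
        rw [Finset.image_singleton]
        exact hu₀X
      · intro σ hσ
        rw [Set.mem_singleton_iff] at hσ
        subst hσ
        rw [Finset.image_singleton]
        simp
    · -- m = 0 : a path between the two endpoints
      subst hm0
      obtain ⟨e⟩ := hK.2.1
      obtain ⟨a, b, hab, hKeq⟩ := sphere0_shape hK.1 e
      subst hKeq
      have hfa : ({f a} : Finset U) ∈ X := by
        have := hsimp {a} (Set.mem_insert _ _)
        rwa [Finset.image_singleton] at this
      have hfb : ({f b} : Finset U) ∈ X := by
        have := hsimp {b} (Set.mem_insert_of_mem _ rfl)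
        rwa [Finset.image_singleton] at this
      haveI := hconn
      obtain ⟨n, x, hn1, hx0, hxn, hstep⟩ : ∃ (n : ℕ) (x : ℕ → U), 1 ≤ n ∧ x 0 = f a ∧
          x n = f b ∧ ∀ i < n, eRel X (x i) (x (i+1)) := by
        by_cases hfab : f a = f b
        · have hnbr : ∃ c, eRel X (f a) c := by
            by_cases hua : f a = a0
            · rcases Relation.ReflTransGen.cases_head (vertices_reachable hX hfa hb0)
                with heq | ⟨c, hstep, _⟩
              · exact absurd (hua ▸ heq) hab0
              · exact ⟨c, hstep⟩
            · rcases Relation.ReflTransGen.cases_head (vertices_reachable hX hfa ha0)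
                with heq | ⟨c, hstep, _⟩
              · exact absurd heq hua
              · exact ⟨c, hstep⟩
          obtain ⟨c, hc⟩ := hnbr
          refine ⟨2, fun i => if i = 1 then c else f a, by omega, ?_, ?_, ?_⟩
          · show (if 0 = 1 then c else f a) = f a
            rw [if_neg (by omega)]
          · show (if 2 = 1 then c else f a) = f b
            rw [if_neg (by omega)]
            exact hfab
          · intro i hi
            show eRel X (if i = 1 then c else f a) (if i + 1 = 1 then c else f a)
            by_cases h1 : i = 0
            · subst h1
              rw [if_neg (by omega), if_pos rfl]
              exact hc
            · have h2 : i = 1 := by omega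
              subst h2
              rw [if_pos rfl, if_neg (by omega)]
              exact eRel_symm hc
        · obtain ⟨n, x, hx0, hxn, hstep⟩ := rtg_to_walk (vertices_reachable hX hfa hfb)
          refine ⟨n, x, ?_, hx0, hxn, hstep⟩
          rcases Nat.eq_zero_or_pos n with h0 | h0
          · subst h0
            exact absurd (hx0.symm.trans hxn) hfab
          · omega
      set ι : ℕ → V ⊕ ℕ :=
        fun i => if i = 0 then Sum.inl a else if i = n then Sum.inl b else Sum.inr i
        with hιdef
      have hval : ∀ k, (ι k = Sum.inl a ∧ k = 0) ∨ (ι k = Sum.inl b ∧ k = n) ∨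
          (ι k = Sum.inr k ∧ k ≠ 0 ∧ k ≠ n) := by
        intro k
        simp only [hιdef]
        by_cases h0 : k = 0
        · left; exact ⟨by rw [if_pos h0], h0⟩
        · by_cases hn' : k = n
          · right; left; exact ⟨by rw [if_neg h0, if_pos hn'], hn'⟩
          · right; right; exact ⟨by rw [if_neg h0, if_neg hn'], h0, hn'⟩
      have hι : ∀ i ≤ n, ∀ j ≤ n, ι i = ι j → i = j := by
        intro i hi j hj hij
        rcases hval i with ⟨e1, h1⟩ | ⟨e1, h1⟩ | ⟨e1, h1, h1'⟩ <;>
          rcases hval j with ⟨e2, h2⟩ | ⟨e2, h2⟩ | ⟨e2, h2, h2'⟩ <;>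
          rw [e1, e2] at hij
        · omega
        · exact absurd (Sum.inl.inj hij) hab
        · exact absurd hij (by simp)
        · exact absurd (Sum.inl.inj hij).symm hab
        · omega
        · exact absurd hij (by simp)
        · exact absurd hij (by simp)
        · exact absurd hij (by simp)
        · rw [Sum.inr.inj hij]
      have hι0 : ι 0 = Sum.inl a := by simp [hιdef]
      have hιn : ι n = Sum.inl b := by
        simp only [hιdef]
        rw [if_neg (by omega)]
        simp
      set F : V ⊕ ℕ → U := Sum.elim f x with hFdef
      have hFι : ∀ i ≤ n, F (ι i) = x i := by
        intro i hi
        rcases hval i with ⟨e1, h1⟩ | ⟨e1, h1⟩ | ⟨e1, _, _⟩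
        · rw [e1]
          show f a = x i
          rw [h1, hx0]
        · rw [e1]
          show f b = x i
          rw [h1, hxn]
        · rw [e1]
          rfl
      have hL1 : IsCombTriDisc ((0:ℤ) + 1) (pathC n ι) := by
        rw [show ((0:ℤ) + 1) = 1 by norm_num]
        exact pathC_isCombTriDisc hn1 hι
      refine ⟨V ⊕ ℕ, pathC n ι, Sum.inl, F, hL1, Sum.inl_injective, ?_, ?_, fun v => rfl,
        ?_, ?_⟩
      · intro σ hσ
        rcases Set.mem_insert_iff.1 hσ with rfl | hσ
        · rw [image_singleton']
          exact Or.inl ⟨0, by omega, by rw [hι0]⟩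
        · rw [Set.mem_singleton_iff] at hσ
          subst hσ
          rw [image_singleton']
          exact Or.inl ⟨n, le_rfl, by rw [hιn]⟩
      · have hbd1 : discBoundary ((0:ℤ) + 1) (pathC n ι)
            = {({ι 0} : Finset (V ⊕ ℕ)), {ι n}} := by
          rw [show ((0:ℤ) + 1) = 1 by norm_num]
          exact pathC_boundary hn1 hι
        rw [hbd1]
        ext τ
        constructor
        · rintro ⟨σ, hσ, rfl⟩
          rcases Set.mem_insert_iff.1 hσ with rfl | hσ
          · beta_reduce
            rw [image_singleton']
            exact Set.mem_insert_iff.2 (Or.inl (by rw [hι0]))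
          · rw [Set.mem_singleton_iff] at hσ
            subst hσ
            beta_reduce
            rw [image_singleton']
            exact Set.mem_insert_iff.2 (Or.inr (by rw [hιn]; exact rfl))
        · intro hτ
          rcases Set.mem_insert_iff.1 hτ with rfl | hτ
          · refine ⟨{a}, Set.mem_insert _ _, ?_⟩
            beta_reduce
            rw [image_singleton', hι0]
          · rw [Set.mem_singleton_iff] at hτ
            subst hτ
            refine ⟨{b}, Set.mem_insert_of_mem _ rfl, ?_⟩
            beta_reduce
            rw [image_singleton', hιn]
      · intro σ hσ
        rcases hσ with ⟨i, hi, rfl⟩ | ⟨i, hi, rfl⟩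
        · rw [image_singleton', hFι i hi]
          by_cases hi' : i < n
          · exact eRel_vtx_left hX (hstep i hi')
          · have h2 : i = n := by omega
            have h3 := hstep (n-1) (by omega)
            have h4 : n - 1 + 1 = n := by omega
            rw [h4] at h3
            rw [h2]
            exact eRel_vtx_right hX h3
        · rw [image_pair', hFι i (by omega), hFι (i+1) (by omega)]
          exact (hstep i hi).2
      · intro σ hσ
        rcases hσ with ⟨i, hi, rfl⟩ | ⟨i, hi, rfl⟩
        · rw [image_singleton']
          simp
        · have hne2 : x i ≠ x (i+1) := (hstep i hi).1
          have hneι : ι i ≠ ι (i+1) := by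
            intro h2
            have := hι i (by omega) (i+1) (by omega) h2
            omega
          rw [image_pair', hFι i (by omega), hFι (i+1) (by omega),
            card_pair' hne2, card_pair' hneι]
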